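/- arXiv:1808.01313 — 8 statements merged into one kernel-verified Lean document; each statement's English description precedes it below -/
import Mathlib

section
/- Every nontrivial square-complementary graph has minimum degree at least 2. -/
open SimpleGraph

/-- The square of a graph: two distinct vertices are adjacent iff they are at
distance at most 2 in `G`, i.e. adjacent or having a common neighbor. -/
def SimpleGraph.square {V : Type*} (G : SimpleGraph V) : SimpleGraph V where
  Adj u v := u ≠ v ∧ (G.Adj u v ∨ ∃ w, G.Adj u w ∧ G.Adj w v)
  symm := by
    constructor
    rintro u v ⟨h, h' | ⟨w, hw1, hw2⟩⟩
    · exact ⟨h.symm, Or.inl h'.symm⟩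
    · exact ⟨h.symm, Or.inr ⟨w, hw2.symm, hw1.symm⟩⟩
  loopless := by constructor; rintro v ⟨h, -⟩; exact h rfl

/-- A graph is square-complementary (squco) if its square is isomorphic to its
complement. -/
def SimpleGraph.IsSquco {V : Type*} (G : SimpleGraph V) : Prop :=
  Nonempty (G.square ≃g Gᶜ)

/-- Every nontrivial square-complementary graph has minimum degree at least 2. -/
theorem isSquco_two_le_degree {V : Type*} [Fintype V] [Nontrivial V] (G : SimpleGraph V)
    [DecidableRel G.Adj] (h : G.IsSquco) (v : V) : 2 ≤ G.degree v := by
  obtain ⟨e⟩ := h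
  -- Step 0: no isolated vertex
  have L0 : ∀ x : V, ∃ y, G.Adj x y := by
    intro x
    by_contra hx
    push_neg at hx
    have hsq : ∀ z, ¬ G.square.Adj x z := by
      rintro z ⟨hne, hadj | ⟨w, hw1, hw2⟩⟩
      · exact hx z hadj
      · exact hx w hw1
    have hadj : ∀ z, z ≠ x → G.Adj (e x) (e z) := by
      intro z hz
      have h1 : ¬ Gᶜ.Adj (e x) (e z) := by
        rw [e.map_rel_iff]; exact hsq z
      rw [compl_adj] at h1
      push_neg at h1
      exact h1 (fun hc => hz (e.toEquiv.injective hc).symm)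
    by_cases hex : e x = x
    · obtain ⟨y, hy⟩ := exists_ne x
      have h2 := hadj y hy
      rw [hex] at h2
      exact hx (e y) h2
    · have hzx : e.symm x ≠ x := by
        intro hc
        apply hex
        have h3 := e.apply_symm_apply x
        rw [hc] at h3; exact h3
      have h4 := hadj (e.symm x) hzx
      rw [e.apply_symm_apply] at h4
      exact hx (e x) h4.symm
  -- Step 1: no vertex is universal in the square
  have L1 : ∀ x : V, ∃ z, z ≠ x ∧ ¬ G.square.Adj x z := by
    intro x
    by_contra hx
    push_neg at hx
    have hiso : ∀ t, ¬ G.Adj (e x) t := by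
      intro t hadjt
      by_cases ht : t = e x
      · exact hadjt.ne ht.symm
      · have h2 : G.square.Adj x (e.symm t) := by
          apply hx
          intro hc
          apply ht
          rw [← hc, e.apply_symm_apply]
        have h3 : Gᶜ.Adj (e x) t := by
          have h5 := e.map_rel_iff.mpr h2
          rwa [e.apply_symm_apply] at h5
        exact ((G.compl_adj _ _).mp h3).2 hadjt
    obtain ⟨y, hy⟩ := L0 (e x)
    exact hiso y hy
  -- main argument: suppose degree v ≤ 1
  by_contra hdeg
  push_neg at hdeg
  have hdeg1 : G.degree v ≤ 1 := Nat.lt_succ_iff.mp hdeg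
  obtain ⟨u, hu⟩ := L0 v
  have h1 : ∀ a ∈ G.neighborFinset v, ∀ b ∈ G.neighborFinset v, a = b :=
    Finset.card_le_one.mp hdeg1
  have huniq : ∀ y, G.Adj v y → y = u := by
    intro y hy
    exact h1 y ((G.mem_neighborFinset v y).mpr hy) u ((G.mem_neighborFinset v u).mpr hu)
  -- v is simplicial in the square
  have claimA : ∀ y z, G.square.Adj v y → G.square.Adj v z → y ≠ z → G.square.Adj y z := by
    have hnb : ∀ y, G.square.Adj v y → y = u ∨ G.Adj u y := by
      rintro y ⟨hne, hadj | ⟨w, hw1, hw2⟩⟩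
      · exact Or.inl (huniq y hadj)
      · have hw : w = u := huniq w hw1
        subst hw
        exact Or.inr hw2
    intro y z hy hz hyz
    rcases hnb y hy with rfl | hyu
    · rcases hnb z hz with rfl | hzu
      · exact absurd rfl hyz
      · exact ⟨hyz, Or.inl hzu⟩
    · rcases hnb z hz with rfl | hzu
      · exact ⟨hyz, Or.inl hyu.symm⟩
      · exact ⟨hyz, Or.inr ⟨u, hyu.symm, hzu⟩⟩
  set a := e v with ha
  -- non-neighbors of a are pairwise non-adjacent
  have claimB : ∀ y z, ¬ G.Adj a y → ¬ G.Adj a z → y ≠ a → z ≠ a → y ≠ z → ¬ G.Adj y z := by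
    intro y z hay haz hya hza hyz hadj
    have hb1 : Gᶜ.Adj a y := (G.compl_adj _ _).mpr ⟨Ne.symm hya, hay⟩
    have hb2 : Gᶜ.Adj a z := (G.compl_adj _ _).mpr ⟨Ne.symm hza, haz⟩
    have h1' : G.square.Adj v (e.symm y) := by
      have hb3 : Gᶜ.Adj (e v) (e (e.symm y)) := by rwa [e.apply_symm_apply]
      exact e.map_rel_iff.mp hb3
    have h2' : G.square.Adj v (e.symm z) := by
      have hb4 : Gᶜ.Adj (e v) (e (e.symm z)) := by rwa [e.apply_symm_apply]
      exact e.map_rel_iff.mp hb4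
    have hne : e.symm y ≠ e.symm z := fun hc => hyz (e.symm.toEquiv.injective hc)
    have h3 := claimA _ _ h1' h2' hne
    have h4 : Gᶜ.Adj y z := by
      have hb5 := e.map_rel_iff.mpr h3
      rwa [e.apply_symm_apply, e.apply_symm_apply] at hb5
    exact ((G.compl_adj _ _).mp h4).2 hadj
  -- a is universal in the square: contradiction with L1
  obtain ⟨z₀, hz0ne, hz0⟩ := L1 a
  apply hz0
  by_cases hadj : G.Adj a z₀
  · exact ⟨Ne.symm hz0ne, Or.inl hadj⟩
  · obtain ⟨t, ht⟩ := L0 z₀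
    have hta : t ≠ a := fun hc => hadj (by rw [← hc]; exact ht.symm)
    have hat : G.Adj a t := by
      by_contra hat
      exact claimB z₀ t hadj hat hz0ne hta ht.ne ht
    exact ⟨Ne.symm hz0ne, Or.inr ⟨t, hat, ht.symm⟩⟩
end

section
/- If G is a nontrivial square-complementary graph, then the diameter of G is 3 or 4. -/
open SimpleGraph

private lemma square_reachable {V : Type*} {G : SimpleGraph V} {u v : V}
    (h : G.square.Reachable u v) : G.Reachable u v := by
  obtain ⟨w⟩ := h
  induction w with
  | nil => exact Reachable.refl _
  | cons h p ih =>
    obtain ⟨hne, hadj | ⟨x, h1, h2⟩⟩ := h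
    · exact hadj.reachable.trans ih
    · exact (h1.reachable.trans h2.reachable).trans ih

private lemma square_adj_dist_le {V : Type*} {G : SimpleGraph V} {u v : V}
    (hc : G.Connected) (h : G.square.Adj u v) : G.dist u v ≤ 2 := by
  obtain ⟨hne, hadj | ⟨x, h1, h2⟩⟩ := h
  · rw [SimpleGraph.dist_eq_one_iff_adj.mpr hadj]; norm_num
  · calc G.dist u v ≤ G.dist u x + G.dist x v := hc.dist_triangle
      _ ≤ 2 := by
        rw [SimpleGraph.dist_eq_one_iff_adj.mpr h1,
          SimpleGraph.dist_eq_one_iff_adj.mpr h2]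

private lemma connected_of_squco {V : Type*} [Nonempty V] {G : SimpleGraph V}
    (φ : G.square ≃g Gᶜ) : G.Connected := by
  rw [SimpleGraph.connected_iff]
  refine ⟨?_, inferInstance⟩
  by_contra hnc
  simp only [SimpleGraph.Preconnected, not_forall] at hnc
  obtain ⟨u, v, huv⟩ := hnc
  have hcadj : ∀ p q : V, ¬G.Reachable p q → Gᶜ.Adj p q := by
    intro p q hpq
    rw [SimpleGraph.compl_adj]
    exact ⟨fun he => hpq (he ▸ Reachable.refl _), fun ha => hpq ha.reachable⟩
  have hGc : ∀ a b : V, Gᶜ.Reachable a b := by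
    intro a b
    by_cases hab : G.Reachable a b
    · have hc : ¬G.Reachable a u ∨ ¬G.Reachable a v := by
        by_contra h'
        push_neg at h'
        exact huv (h'.1.symm.trans h'.2)
      obtain hc | hc := hc
      · have hb : ¬G.Reachable b u := fun h' => hc (hab.trans h')
        exact (hcadj a u hc).reachable.trans (hcadj b u hb).reachable.symm
      · have hb : ¬G.Reachable b v := fun h' => hc (hab.trans h')
        exact (hcadj a v hc).reachable.trans (hcadj b v hb).reachable.symm
    · exact (hcadj a b hab).reachable
  apply huv
  have h2 : Gᶜ.Reachable (φ u) (φ v) := hGc _ _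
  have h3 : G.square.Reachable u v := by
    have := h2.map (φ.symm : Gᶜ →g G.square)
    simpa using this
  exact square_reachable h3

/-- A nontrivial square-complementary graph has diameter 3 or 4. -/
theorem isSquco_diam_eq_three_or_four {V : Type*} [Fintype V] [Nontrivial V]
    (G : SimpleGraph V) (h : G.IsSquco) : G.diam = 3 ∨ G.diam = 4 := by
  obtain ⟨φ⟩ := h
  have hconn : G.Connected := connected_of_squco φ
  have hnetop : G.ediam ≠ ⊤ := by
    obtain ⟨a, b, hab⟩ := SimpleGraph.exists_edist_eq_ediam_of_finite (G := G)
    rw [← hab]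
    exact SimpleGraph.edist_ne_top_iff_reachable.mpr (hconn a b)
  by_contra hcon
  push_neg at hcon
  obtain ⟨h3, h4⟩ := hcon
  rcases Nat.lt_or_ge G.diam 3 with hlt | hge
  · -- diameter ≤ 2 leads to G = ⊥, contradicting connectedness
    have hsq : ∀ u v : V, u ≠ v → G.square.Adj u v := by
      intro u v hne
      have hdle : G.dist u v ≤ 2 :=
        le_trans (SimpleGraph.dist_le_diam hnetop) (by omega)
      have hdpos : 0 < G.dist u v := hconn.pos_dist_of_ne hne
      refine ⟨hne, ?_⟩
      interval_cases hdv : G.dist u v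
      · exact Or.inl (SimpleGraph.dist_eq_one_iff_adj.mp hdv)
      · obtain ⟨p, hp⟩ := hconn.exists_walk_length_eq_dist u v
        rw [hdv] at hp
        cases p with
        | nil => simp at hp
        | cons h1 q =>
          cases q with
          | nil => simp at hp
          | cons h2 r =>
            cases r with
            | nil => exact Or.inr ⟨_, h1, h2⟩
            | cons h3 s => simp [SimpleGraph.Walk.length_cons] at hp
    have hbot : ∀ x y : V, ¬G.Adj x y := by
      intro x y hxy
      have hne : φ.symm x ≠ φ.symm y := fun he => hxy.ne (φ.symm.injective he)
      have := φ.map_adj_iff.mpr (hsq _ _ hne)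
      simp only [RelIso.apply_symm_apply] at this
      exact this.2 hxy
    have : G = ⊥ := by ext x y; simp [hbot x y]
    rw [this] at hconn
    exact SimpleGraph.not_connected_bot hconn
  · -- diameter ≥ 5 is impossible
    have hge5 : 5 ≤ G.diam := by omega
    obtain ⟨a, b, hab⟩ := SimpleGraph.exists_dist_eq_diam (G := G)
    have hne : a ≠ b := by
      intro he; rw [he, SimpleGraph.dist_self] at hab; omega
    have hnadj : ¬G.square.Adj a b := by
      intro hadj
      have := square_adj_dist_le hconn hadj
      omega
    have hnmid : ∀ w : V, ¬(G.square.Adj a w ∧ G.square.Adj w b) := by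
      rintro w ⟨h1, h2⟩
      have d1 := square_adj_dist_le hconn h1
      have d2 := square_adj_dist_le hconn h2
      have := hconn.dist_triangle (u := a) (v := w) (w := b)
      omega
    set x := φ a with hx
    set y := φ b with hy
    have hxy : x ≠ y := fun he => hne (φ.injective he)
    have hGadj : G.Adj x y := by
      by_contra hnG
      exact hnadj (φ.map_adj_iff.mp ((SimpleGraph.compl_adj _ _ _).mpr ⟨hxy, hnG⟩))
    have hdom : ∀ w : V, w ≠ x → w ≠ y → G.Adj x w ∨ G.Adj w y := by
      intro w hwx hwy
      by_contra hcontra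
      push_neg at hcontra
      apply hnmid (φ.symm w)
      constructor
      · apply φ.map_adj_iff.mp
        simp only [RelIso.apply_symm_apply]
        exact (SimpleGraph.compl_adj _ _ _).mpr ⟨fun he => hwx (he.symm), fun ha => hcontra.1 ha⟩
      · apply φ.map_adj_iff.mp
        simp only [RelIso.apply_symm_apply]
        exact (SimpleGraph.compl_adj _ _ _).mpr ⟨hwy, fun ha => hcontra.2 ha⟩
    have hclose : ∀ p : V, G.dist p x ≤ 1 ∨ G.dist p y ≤ 1 := by
      intro p
      by_cases hpx : p = x
      · left; rw [hpx, SimpleGraph.dist_self]; omega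
      by_cases hpy : p = y
      · right; rw [hpy, SimpleGraph.dist_self]; omega
      rcases hdom p hpx hpy with hadj | hadj
      · left; rw [SimpleGraph.dist_comm, SimpleGraph.dist_eq_one_iff_adj.mpr hadj]
      · right; rw [SimpleGraph.dist_eq_one_iff_adj.mpr hadj]
    have hdxy : G.dist x y = 1 := SimpleGraph.dist_eq_one_iff_adj.mpr hGadj
    have hdyx : G.dist y x = 1 := by rw [SimpleGraph.dist_comm]; exact hdxy
    have hsmall : G.dist a b ≤ 3 := by
      rcases hclose a with ha | ha <;> rcases hclose b with hb | hb
      · have t1 := hconn.dist_triangle (u := a) (v := x) (w := b)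
        have t2 : G.dist x b = G.dist b x := SimpleGraph.dist_comm ..
        omega
      · have t1 := hconn.dist_triangle (u := a) (v := x) (w := b)
        have t2 := hconn.dist_triangle (u := x) (v := y) (w := b)
        have t3 : G.dist y b = G.dist b y := SimpleGraph.dist_comm ..
        omega
      · have t1 := hconn.dist_triangle (u := a) (v := y) (w := b)
        have t2 := hconn.dist_triangle (u := y) (v := x) (w := b)
        have t3 : G.dist x b = G.dist b x := SimpleGraph.dist_comm ..
        omega
      · have t1 := hconn.dist_triangle (u := a) (v := y) (w := b)
        have t3 : G.dist y b = G.dist b y := SimpleGraph.dist_comm ..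
        omega
    omega
end

section
/- If G is a nontrivial square-complementary graph, then the radius of G equals 3. -/
open SimpleGraph

/-- The radius of a graph: the minimum over all vertices `v` of the maximum
distance from `v` to other vertices. -/
noncomputable def SimpleGraph.radiusNat {V : Type*} (G : SimpleGraph V) : ℕ :=
  (⨅ v : V, ⨆ u : V, G.edist v u).toNat

private lemma enat_le_two_of_lt_three {t : ℕ∞} (h : t < 3) : t ≤ 2 := by
  cases t with
  | top => simp at h
  | coe n =>
    have : n < 3 := by exact_mod_cast h
    exact_mod_cast Nat.lt_succ_iff.mp this

private lemma edist_le_two_of_square_adj {V : Type*} {G : SimpleGraph V} {x y : V}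
    (h : G.square.Adj x y) : G.edist x y ≤ 2 := by
  obtain ⟨hne, hadj | ⟨w, h1, h2⟩⟩ := h
  · calc G.edist x y ≤ 1 := (edist_eq_one_iff_adj.mpr hadj).le
    _ ≤ 2 := by norm_num
  · calc G.edist x y ≤ G.edist x w + G.edist w y := G.edist_triangle
    _ ≤ 1 + 1 := add_le_add (edist_eq_one_iff_adj.mpr h1).le (edist_eq_one_iff_adj.mpr h2).le
    _ = 2 := by norm_num

private lemma square_adj_of_edist_le_two {V : Type*} {G : SimpleGraph V} {x y : V}
    (hne : x ≠ y) (h : G.edist x y ≤ 2) : G.square.Adj x y := by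
  have hnt : G.edist x y ≠ ⊤ := by
    intro ht; rw [ht] at h; exact (by norm_num : ¬ ((⊤ : ℕ∞) ≤ 2)) h
  obtain ⟨p, hp⟩ := G.exists_walk_of_edist_ne_top hnt
  have hlen : p.length ≤ 2 := by
    have := hp ▸ h
    exact_mod_cast this
  refine ⟨hne, ?_⟩
  cases p with
  | nil => exact absurd rfl hne
  | cons h1 q =>
    cases q with
    | nil => exact Or.inl h1
    | cons h2 r =>
      cases r with
      | nil => exact Or.inr ⟨_, h1, h2⟩
      | cons h3 s => simp [SimpleGraph.Walk.length_cons] at hlen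

/-- A nontrivial square-complementary graph has radius 3. -/
theorem isSquco_radius_eq_three {V : Type*} [Fintype V] [Nontrivial V]
    (G : SimpleGraph V) (h : G.IsSquco) : G.radiusNat = 3 := by
  obtain ⟨e⟩ := h
  have hmap : ∀ a b : V, G.square.Adj a b ↔ Gᶜ.Adj (e a) (e b) :=
    fun a b => (e.map_adj_iff).symm
  -- Step A : every vertex has eccentricity ≥ 3
  have stepA : ∀ v : V, ∃ u : V, 3 ≤ G.edist v u := by
    intro v
    by_contra hB
    push_neg at hB
    have huniv : ∀ u : V, u ≠ v → G.square.Adj v u := fun u hu =>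
      square_adj_of_edist_le_two (Ne.symm hu) (enat_le_two_of_lt_three (hB u))
    -- x := e v is isolated in G
    have hxiso : ∀ z : V, ¬ G.Adj (e v) z := by
      intro z hz
      have hzx : e v ≠ z := hz.ne
      have huv : e.symm z ≠ v := by
        intro hh
        apply hzx
        rw [← hh, e.apply_symm_apply]
      have := (hmap v (e.symm z)).mp (huniv _ huv)
      rw [e.apply_symm_apply] at this
      exact this.2 hz
    have hxsq : ∀ z : V, ¬ G.square.Adj (e v) z := by
      rintro z ⟨hne, hadj | ⟨w, h1, h2⟩⟩
      · exact hxiso z hadj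
      · exact hxiso w h1
    -- a := e (e v) is universal in G
    have hall : ∀ z : V, z ≠ e v → G.Adj (e (e v)) (e z) := by
      intro z hz
      have h1 : ¬ Gᶜ.Adj (e (e v)) (e z) := fun hc => hxsq z ((hmap (e v) z).mpr hc)
      rw [compl_adj] at h1
      push_neg at h1
      exact h1 (fun hh => hz (e.injective hh).symm)
    rcases eq_or_ne (e (e v)) (e v) with ha | ha
    · obtain ⟨z, hz⟩ := exists_ne (e v)
      exact hxiso (e z) (ha ▸ hall z hz)
    · by_cases hz : e.symm (e v) = e v
      · have h2 := congrArg e hz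
        rw [e.apply_symm_apply] at h2
        exact ha h2.symm
      · have := hall _ hz
        rw [e.apply_symm_apply] at this
        exact hxiso (e (e v)) this.symm
  -- Step B : some vertex has eccentricity ≤ 3
  have stepB : ∃ v : V, ∀ u : V, G.edist v u ≤ 3 := by
    by_contra hB
    push_neg at hB
    -- main claim: the whole graph has diameter ≤ 2, contradiction
    have main : ∀ x' y' : V, x' ≠ y' → G.edist x' y' ≤ 2 := by
      intro x' y' hne'
      set x := e.symm x' with hx
      set y := e.symm y' with hy
      have hnexy : x ≠ y := fun hh => hne' (by rw [hx, hy] at hh; exact e.symm.injective hh)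
      rcases le_or_gt (G.edist x y) 2 with hle | hlt
      · -- near case: find middle vertex c, then far vertex w from c
        obtain ⟨c, hc1, hc2⟩ : ∃ c : V, G.edist x c ≤ 1 ∧ G.edist c y ≤ 1 := by
          obtain ⟨-, hadj | ⟨w, h1, h2⟩⟩ := square_adj_of_edist_le_two hnexy hle
          · exact ⟨x, by simp [SimpleGraph.edist_self], (edist_eq_one_iff_adj.mpr hadj).le⟩
          · exact ⟨w, (edist_eq_one_iff_adj.mpr h1).le, (edist_eq_one_iff_adj.mpr h2).le⟩
        obtain ⟨w, hw⟩ := hB c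
        -- w is far from both x and y
        have hfar : ∀ z : V, G.edist z c ≤ 1 → 2 < G.edist z w := by
          intro z hzc
          by_contra hc
          push_neg at hc
          have : G.edist c w ≤ 1 + 2 :=
            (G.edist_triangle (v := z)).trans (add_le_add (SimpleGraph.edist_comm ▸ hzc) hc)
          exact absurd (hw.trans_le this) (by norm_num)
        have hxw := hfar x hc1
        have hyw := hfar y (SimpleGraph.edist_comm ▸ hc2)
        have hwx : w ≠ x := by
          intro hh; rw [hh, SimpleGraph.edist_self] at hxw; exact absurd hxw (by norm_num)
        have hwy : w ≠ y := by
          intro hh; rw [hh, SimpleGraph.edist_self] at hyw; exact absurd hyw (by norm_num)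
        have hsq1 : ¬ G.square.Adj x w := fun hs =>
          absurd (edist_le_two_of_square_adj hs) (not_le.mpr hxw)
        have hsq2 : ¬ G.square.Adj w y := fun hs =>
          absurd (edist_le_two_of_square_adj hs) (not_le.mpr (SimpleGraph.edist_comm ▸ hyw))
        have ha1 : G.Adj x' (e w) := by
          have h1 : ¬ Gᶜ.Adj (e x) (e w) := fun hc => hsq1 ((hmap x w).mpr hc)
          rw [compl_adj] at h1; push_neg at h1
          have := h1 (fun hh => hwx (e.injective hh).symm)
          rwa [hx, e.apply_symm_apply] at this
        have ha2 : G.Adj (e w) y' := by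
          have h1 : ¬ Gᶜ.Adj (e w) (e y) := fun hc => hsq2 ((hmap w y).mpr hc)
          rw [compl_adj] at h1; push_neg at h1
          have := h1 (fun hh => hwy (e.injective hh))
          rwa [hy, e.apply_symm_apply] at this
        calc G.edist x' y' ≤ G.edist x' (e w) + G.edist (e w) y' := G.edist_triangle
          _ ≤ 1 + 1 := add_le_add (edist_eq_one_iff_adj.mpr ha1).le (edist_eq_one_iff_adj.mpr ha2).le
          _ = 2 := by norm_num
      · -- far case: x' and y' are adjacent in G
        have hsq : ¬ G.square.Adj x y := fun hs =>
          absurd (edist_le_two_of_square_adj hs) (not_le.mpr hlt)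
        have h1 : ¬ Gᶜ.Adj (e x) (e y) := fun hc => hsq ((hmap x y).mpr hc)
        rw [compl_adj] at h1; push_neg at h1
        have := h1 (fun hh => hnexy (e.injective hh))
        rw [hx, hy, e.apply_symm_apply, e.apply_symm_apply] at this
        exact (edist_eq_one_iff_adj.mpr this).le.trans (by norm_num)
    obtain ⟨v, u, hvu⟩ : ∃ v u : V, 3 < G.edist v u := ⟨Classical.arbitrary V,
      hB (Classical.arbitrary V)⟩
    have hneq : v ≠ u := by
      intro hh; rw [hh, SimpleGraph.edist_self] at hvu; exact absurd hvu (by norm_num)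
    exact absurd (main v u hneq) (not_le.mpr ((by norm_num : (2:ℕ∞) < 3).trans hvu))
  -- assemble
  have hval : (⨅ v : V, ⨆ u : V, G.edist v u) = 3 := by
    apply le_antisymm
    · obtain ⟨v, hv⟩ := stepB
      exact (iInf_le _ v).trans (iSup_le hv)
    · refine le_iInf fun v => ?_
      obtain ⟨u, hu⟩ := stepA v
      exact hu.trans (le_iSup _ u)
  rw [SimpleGraph.radiusNat, hval]
  rfl
end

section
/- If G is a nontrivial regular square-complementary graph, then the diameter of G is exactly 3. -/
open SimpleGraph

lemma square_adj_iff_edist {V : Type*} (G : SimpleGraph V) (u v : V) :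
    G.square.Adj u v ↔ u ≠ v ∧ G.edist u v ≤ 2 := by
  constructor
  · rintro ⟨hne, hadj | ⟨w, h1, h2⟩⟩
    · exact ⟨hne, by rw [edist_eq_one_iff_adj.mpr hadj]; norm_num⟩
    · refine ⟨hne, le_trans (G.edist_triangle (v := w)) ?_⟩
      rw [edist_eq_one_iff_adj.mpr h1, edist_eq_one_iff_adj.mpr h2]
      norm_num
  · rintro ⟨hne, hle⟩
    refine ⟨hne, ?_⟩
    have h0 : G.edist u v ≠ 0 := by
      rw [Ne, SimpleGraph.edist_eq_zero_iff]; exact hne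
    have htop : G.edist u v ≠ ⊤ := by
      intro h; rw [h] at hle; exact (by norm_num : ¬ (⊤ : ℕ∞) ≤ 2) hle
    lift G.edist u v to ℕ using htop with k hk
    have hk2 : k ≤ 2 := by exact_mod_cast hle
    have hk0 : k ≠ 0 := by exact_mod_cast h0
    match k, hk, hk2, hk0 with
    | 1, hk, _, _ =>
      left
      exact edist_eq_one_iff_adj.mp (by exact_mod_cast hk.symm)
    | 2, hk, _, _ =>
      right
      have hk' : G.edist u v = ((2 : ℕ) : ℕ∞) := hk.symm
      obtain ⟨p, hp⟩ := exists_walk_of_edist_eq_coe hk'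
      cases p with
      | nil => simp at hp
      | cons h1 q =>
        cases q with
        | nil => simp at hp
        | cons h2 r =>
          simp at hp
          have := hp.eq
          subst this
          exact ⟨_, h1, h2⟩

/-- A nontrivial regular square-complementary graph has diameter exactly 3. -/
theorem isSquco_regular_diam_eq_three {V : Type*} [Fintype V] [Nontrivial V]
    (G : SimpleGraph V) [DecidableRel G.Adj] (h : G.IsSquco)
    (hreg : ∃ d, G.IsRegularOfDegree d) : G.diam = 3 := by
  classical
  obtain ⟨d, hreg⟩ := hreg
  obtain ⟨φ⟩ := h
  set n := Fintype.card V with hn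
  -- neighbor set cardinalities
  have hNd : ∀ v : V, (G.neighborSet v).ncard = d := by
    intro v
    rw [Set.ncard_eq_toFinset_card', ← hreg v]
    congr 1
  -- complement count
  have hcompl : ∀ (H : SimpleGraph V) (v : V),
      (H.neighborSet v).ncard + ((H.neighborSet v)ᶜ \ {v}).ncard + 1 = n := by
    intro H v
    have hv : v ∈ (H.neighborSet v)ᶜ := by simp
    have h1 : (H.neighborSet v)ᶜ = insert v ((H.neighborSet v)ᶜ \ {v}) := by
      rw [Set.insert_diff_singleton, Set.insert_eq_of_mem hv]
    have h2 := Set.ncard_add_ncard_compl (H.neighborSet v) (Set.toFinite _) (Set.toFinite _)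
    rw [h1, Set.ncard_insert_of_notMem (by simp) (Set.toFinite _)] at h2
    rw [Nat.card_eq_fintype_card] at h2
    rw [hn]
    omega
  -- square neighbor card equals complement-graph neighbor card
  have hsqc : ∀ u : V, (G.square.neighborSet u).ncard = (Gᶜ.neighborSet (φ u)).ncard := by
    intro u
    rw [Set.ncard_eq_toFinset_card', Set.ncard_eq_toFinset_card']
    rw [Set.toFinset_card, Set.toFinset_card]
    exact Fintype.card_congr (φ.mapNeighborSet u)
  -- Gᶜ neighbor set: note Gᶜ.neighborSet w = (G.neighborSet w)ᶜ \ {w}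
  have hGc : ∀ w : V, (Gᶜ.neighborSet w).ncard + d + 1 = n := by
    intro w
    have := hcompl G w
    rw [hNd w, ← neighborSet_compl] at this
    omega
  -- M u : vertices at edist > 2 from u, has card d
  set M : V → Set V := fun u => (G.square.neighborSet u)ᶜ \ {u} with hM
  have hMd : ∀ u : V, (M u).ncard = d := by
    intro u
    have h1 : (G.square.neighborSet u).ncard + (M u).ncard + 1 = n := hcompl G.square u
    have h2 := hsqc u
    have h3 := hGc (φ u)
    have h4 : d + 1 ≤ n := by
      have := hcompl G u
      rw [hNd u] at this
      omega
    rw [h2] at h1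
    omega
  have hMmem : ∀ u w : V, w ∈ M u ↔ w ≠ u ∧ ¬ G.square.Adj u w := by
    intro u w
    simp only [hM, Set.mem_diff, Set.mem_compl_iff, mem_neighborSet, Set.mem_singleton_iff]
    tauto
  -- d ≥ 1
  have hd1 : 1 ≤ d := by
    by_contra hd
    have hd0 : d = 0 := by omega
    have hnoadj : ∀ u w : V, ¬ G.Adj u w := by
      intro u w hadj
      have : (G.neighborSet u).ncard = 0 := by rw [hNd u, hd0]
      rw [Set.ncard_eq_zero (Set.toFinite _)] at this
      exact absurd this (Set.nonempty_iff_ne_empty.mp ⟨w, hadj⟩)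
    obtain ⟨u, w, hne⟩ := Nontrivial.exists_pair_ne (α := V)
    have hwM : w ∈ M u := by
      rw [hMmem]
      refine ⟨hne.symm, ?_⟩
      rintro ⟨-, hadj | ⟨x, hx1, -⟩⟩
      · exact hnoadj u w hadj
      · exact hnoadj u x hx1
    have : (M u).ncard = 0 := by rw [hMd u, hd0]
    rw [Set.ncard_eq_zero (Set.toFinite _)] at this
    rw [this] at hwM
    exact hwM
  -- Step A: edist ≤ 3 everywhere
  have hle3 : ∀ u v : V, G.edist u v ≤ 3 := by
    intro u v
    by_contra hgt
    push_neg at hgt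
    have hne : u ≠ v := by
      intro h; subst h; rw [SimpleGraph.edist_self] at hgt; exact absurd hgt (by norm_num)
    have hvM : v ∈ M u := by
      rw [hMmem]
      refine ⟨hne.symm, fun hadj => ?_⟩
      have := (square_adj_iff_edist G u v).mp hadj
      exact absurd (le_trans this.2 (by norm_num)) (not_le.mpr hgt)
    have hsub : G.neighborSet v ⊆ M u := by
      intro x hx
      rw [mem_neighborSet] at hx
      rw [hMmem]
      have hxd : ¬ G.edist u x ≤ 2 := by
        intro hle
        have htri : G.edist u v ≤ G.edist u x + G.edist x v := G.edist_triangle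
        rw [edist_eq_one_iff_adj.mpr hx.symm] at htri
        have : G.edist u v ≤ 3 := le_trans htri (by
          calc G.edist u x + 1 ≤ 2 + 1 := by gcongr
          _ = 3 := by norm_num)
        exact absurd this (not_le.mpr hgt)
      constructor
      · intro hxu; subst hxu; exact hxd (by rw [SimpleGraph.edist_self]; norm_num)
      · intro hadj
        exact hxd ((square_adj_iff_edist G u x).mp hadj).2
    have heq : G.neighborSet v = M u :=
      Set.eq_of_subset_of_ncard_le hsub (by rw [hMd u, hNd v]) (Set.toFinite _)
    rw [← heq] at hvM
    exact G.loopless.irrefl v hvM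
  -- Step B: some pair at edist exactly 3
  obtain ⟨u⟩ := (inferInstance : Nonempty V)
  have hMne : (M u).Nonempty := by
    rw [← Set.ncard_pos (Set.toFinite _), hMd u]; omega
  obtain ⟨v, hv⟩ := hMne
  rw [hMmem] at hv
  have hgt2 : ¬ G.edist u v ≤ 2 := by
    intro hle
    exact hv.2 ((square_adj_iff_edist G u v).mpr ⟨fun h => hv.1 h.symm, hle⟩)
  have hev : G.edist u v = 3 := by
    have h1 := hle3 u v
    have h2 : (2 : ℕ∞) < G.edist u v := not_le.mp hgt2
    have h3 := Order.add_one_le_of_lt h2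
    norm_num at h3
    exact le_antisymm h1 h3
  have hediam : G.ediam = 3 := by
    apply le_antisymm
    · exact ediam_le_of_edist_le hle3
    · rw [← hev]; exact edist_le_ediam
  have hdd : G.diam = G.ediam.toNat := rfl
  rw [hdd, hediam]
  rfl
end

section
/- The only nontrivial square-complementary graph with maximum degree at most 2 is the 7-cycle C_7. -/
open SimpleGraph

open Finset

set_option linter.unusedSectionVars false

namespace SqucoAux

instance squareDecidableRel {V : Type*} [Fintype V] [DecidableEq V] (G : SimpleGraph V)
    [DecidableRel G.Adj] : DecidableRel G.square.Adj := fun a b =>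
  decidable_of_iff (a ≠ b ∧ (G.Adj a b ∨ ∃ w, G.Adj a w ∧ G.Adj w b)) Iff.rfl


def enc (i j : ℕ) : ℕ := j*(j-1)/2 + i

def ofBits : List Bool → ℕ
  | [] => 0
  | b :: l => b.toNat + 2 * ofBits l

def bitOf (m k : ℕ) : Bool := m / 2^k % 2 == 1

lemma ofBits_lt (l : List Bool) : ofBits l < 2 ^ l.length := by
  induction l with
  | nil => simp [ofBits]
  | cons b l ih => cases b <;> simp [ofBits, List.length_cons, pow_succ] <;> omega

lemma bitOf_ofBits (l : List Bool) (k : ℕ) : bitOf (ofBits l) k = l.getD k false := by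
  induction l generalizing k with
  | nil => simp [ofBits, bitOf]
  | cons b l ih =>
    cases k with
    | zero => cases b <;> simp [ofBits, bitOf] <;> omega
    | succ k =>
      have : ofBits (b :: l) / 2 ^ (k+1) = ofBits l / 2 ^ k := by
        rw [pow_succ, mul_comm (2^k) 2, ← Nat.div_div_eq_div_mul]
        congr 1
        cases b <;> simp [ofBits] <;> omega
      simp only [bitOf, this, List.getD_cons_succ]
      exact ih k

lemma enc_eq_sum (i j : ℕ) : enc i j = (∑ k ∈ range j, k) + i := by
  rw [enc, Finset.sum_range_id]

lemma enc_lt_enc {i j i' j' : ℕ} (h1 : i < j) (hjj : j < j') : enc i j < enc i' j' := by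
  rw [enc_eq_sum, enc_eq_sum]
  have h2 : (∑ k ∈ range (j+1), k) ≤ ∑ k ∈ range j', k :=
    Finset.sum_le_sum_of_subset (by simp [Finset.range_subset]; omega)
  rw [Finset.sum_range_succ] at h2
  omega

lemma enc_inj {i j i' j' : ℕ} (h1 : i < j) (h2 : i' < j')
    (h : enc i j = enc i' j') : i = i' ∧ j = j' := by
  rcases lt_trichotomy j j' with hlt | rfl | hgt
  · exact absurd h (Nat.ne_of_lt (enc_lt_enc h1 hlt))
  · rw [enc, enc] at h; omega
  · exact absurd h.symm (Nat.ne_of_lt (enc_lt_enc h2 hgt))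

lemma enc_bound {n i j : ℕ} (h1 : i < j) (h2 : j < n) : enc i j < n*(n-1)/2 := by
  have : enc i j < enc 0 n := enc_lt_enc h1 h2
  simpa [enc] using this

def adjN {n : ℕ} (m : ℕ) (i j : Fin n) : Bool :=
  decide (i ≠ j) && (if (i:ℕ) < j then bitOf m (enc i j) else bitOf m (enc j i))

def degN (n : ℕ) (m : ℕ) (i : Fin n) : ℕ :=
  (List.finRange n).countP (fun j => adjN m i j)

def sqAdjN (n : ℕ) (m : ℕ) (i j : Fin n) : Bool :=
  decide (i ≠ j) && (adjN m i j || (List.finRange n).any (fun w => adjN m i w && adjN m w j))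

def sqDegN (n : ℕ) (m : ℕ) (i : Fin n) : ℕ :=
  (List.finRange n).countP (fun j => sqAdjN n m i j)

def coDegN (n : ℕ) (m : ℕ) (i : Fin n) : ℕ :=
  (List.finRange n).countP (fun j => decide (i ≠ j) && !adjN m i j)

def okN (n : ℕ) (m : ℕ) : Bool :=
  !((List.finRange n).all (fun i => degN n m i ≤ 2)) ||
  !((List.range n).all (fun d =>
    ((List.finRange n).map (sqDegN n m)).count d == ((List.finRange n).map (coDegN n m)).count d))

variable {V : Type*} [Fintype V] [DecidableEq V] (G : SimpleGraph V) [DecidableRel G.Adj]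

/-- the code of a graph `G` under an identification of its vertices with `Fin n`. -/
def code {n : ℕ} (e : V ≃ Fin n) : ℕ :=
  ofBits ((List.range (n*(n-1)/2)).map fun k =>
    decide (∃ i j : Fin n, (i:ℕ) < (j:ℕ) ∧ enc i j = k ∧ G.Adj (e.symm i) (e.symm j)))

lemma code_lt {n : ℕ} (e : V ≃ Fin n) : code G e < 2 ^ (n*(n-1)/2) := by
  have := ofBits_lt ((List.range (n*(n-1)/2)).map fun k =>
    decide (∃ i j : Fin n, (i:ℕ) < (j:ℕ) ∧ enc i j = k ∧ G.Adj (e.symm i) (e.symm j)))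
  simpa [code] using this

lemma bitOf_code {n : ℕ} (e : V ≃ Fin n) {k : ℕ} (hk : k < n*(n-1)/2) :
    bitOf (code G e) k
      = decide (∃ i j : Fin n, (i:ℕ) < (j:ℕ) ∧ enc i j = k ∧ G.Adj (e.symm i) (e.symm j)) := by
  rw [code, bitOf_ofBits]
  rw [List.getD_eq_getElem?_getD]
  simp [hk]

lemma adjN_code {n : ℕ} (e : V ≃ Fin n) (i j : Fin n) :
    adjN (code G e) i j = true ↔ G.Adj (e.symm i) (e.symm j) := by
  rcases lt_trichotomy (i:ℕ) (j:ℕ) with hij | hij | hij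
  · have hne : i ≠ j := by intro h; subst h; omega
    rw [adjN, if_pos hij, bitOf_code G e (enc_bound hij j.isLt)]
    simp only [Bool.and_eq_true, decide_eq_true_eq]
    constructor
    · rintro ⟨-, ⟨i', j', hlt, henc, hadj⟩⟩
      obtain ⟨hi, hj⟩ := enc_inj hlt hij henc
      rwa [show i' = i from Fin.ext hi, show j' = j from Fin.ext hj] at hadj
    · intro h; exact ⟨hne, i, j, hij, rfl, h⟩
  · have : i = j := Fin.ext hij
    subst this
    simp [adjN, G.irrefl]
  · have hne : i ≠ j := by intro h; subst h; omega
    rw [adjN, if_neg (by omega), bitOf_code G e (enc_bound hij i.isLt)]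
    simp only [Bool.and_eq_true, decide_eq_true_eq]
    constructor
    · rintro ⟨-, ⟨i', j', hlt, henc, hadj⟩⟩
      obtain ⟨hi, hj⟩ := enc_inj hlt hij henc
      rw [show i' = j from Fin.ext hi, show j' = i from Fin.ext hj] at hadj
      exact hadj.symm
    · intro h; exact ⟨hne, j, i, hij, rfl, h.symm⟩

lemma countP_eq_degree {n : ℕ} (e : V ≃ Fin n) (p : Fin n → Bool)
    (H : SimpleGraph V) [DecidableRel H.Adj] (v : V)
    (h : ∀ j, p j = true ↔ H.Adj v (e.symm j)) :
    (List.finRange n).countP p = H.degree v := by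
  classical
  have h1 : (List.finRange n).countP p = (univ.filter (fun j : Fin n => p j = true)).card := by
    rw [Fin.univ_def]
    simp [Finset.filter, Finset.card, Multiset.countP_eq_card_filter, List.countP_eq_length_filter]
  rw [h1, ← card_neighborFinset_eq_degree, neighborFinset_eq_filter]
  apply Finset.card_bij' (fun j _ => e.symm j) (fun w _ => e w)
  · intro j hj
    simp only [mem_filter, mem_univ, true_and] at hj ⊢
    exact (h j).1 hj
  · intro w hw
    simp only [mem_filter, mem_univ, true_and] at hw ⊢
    exact (h (e w)).2 (by simpa using hw)
  · intro j _; simp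
  · intro w _; simp


set_option maxRecDepth 10000 in
theorem good2 : ∀ m < 2 ^ 1, okN 2 m = true := by decide
set_option maxRecDepth 10000 in
theorem good3 : ∀ m < 2 ^ 3, okN 3 m = true := by decide
set_option maxRecDepth 10000 in
theorem good4 : ∀ m < 2 ^ 6, okN 4 m = true := by decide
set_option maxRecDepth 10000 in
theorem good5 : ∀ m < 2 ^ 10, okN 5 m = true := by decide
variable {V : Type*} [Fintype V] [DecidableEq V] (G : SimpleGraph V) [DecidableRel G.Adj]

instance : DecidableRel G.square.Adj := fun a b =>
  decidable_of_iff (a ≠ b ∧ (G.Adj a b ∨ ∃ w, G.Adj a w ∧ G.Adj w b)) Iff.rfl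

/-- degrees are preserved by isomorphisms -/
lemma iso_degree {W : Type*} [Fintype W] (A : SimpleGraph V) (B : SimpleGraph W)
    [DecidableRel A.Adj] [DecidableRel B.Adj] (φ : A ≃g B) (v : V) :
    A.degree v = B.degree (φ v) := by
  rw [← card_neighborSet_eq_degree, ← card_neighborSet_eq_degree]
  exact Fintype.card_congr (φ.mapNeighborSet v)

lemma iso_degree_multiset (A B : SimpleGraph V)
    [DecidableRel A.Adj] [DecidableRel B.Adj] (φ : A ≃g B) :
    Multiset.map (fun v => A.degree v) univ.val = Multiset.map (fun v => B.degree v) univ.val := by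
  have h1 : Multiset.map (fun v => A.degree v) univ.val = Multiset.map (fun v => B.degree (φ v)) univ.val :=
    Multiset.map_congr rfl (fun v _ => iso_degree A B φ v)
  have h2 : Multiset.map φ.toEquiv univ.val = univ.val := by
    have := Finset.map_univ_equiv (φ.toEquiv : V ≃ V)
    calc Multiset.map φ.toEquiv univ.val = (Finset.map φ.toEquiv.toEmbedding univ).val := by
          simp [Finset.map]
      _ = univ.val := by rw [this]
  rw [h1, show (fun v => B.degree (φ v)) = (fun v => B.degree v) ∘ φ.toEquiv from rfl,
    ← Multiset.map_map, h2]

/-- neighbors of a square: key subset bound -/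
lemma square_nbhd_subset (v : V) :
    G.square.neighborFinset v ⊆
      G.neighborFinset v ∪ (G.neighborFinset v).biUnion (fun a => (G.neighborFinset a).erase v) := by
  intro u hu
  rw [mem_neighborFinset] at hu
  obtain ⟨hne, h | ⟨w, hw1, hw2⟩⟩ := hu
  · exact mem_union_left _ (by rwa [mem_neighborFinset])
  · refine mem_union_right _ (mem_biUnion.2 ⟨w, ?_, ?_⟩)
    · rwa [mem_neighborFinset]
    · exact mem_erase.2 ⟨fun h => hne (h ▸ rfl) |>.elim, by rw [mem_neighborFinset]; exact hw2⟩

lemma square_degree_le (hdeg : ∀ u, G.degree u ≤ 2) (v : V) :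
    G.square.degree v ≤ 2 * G.degree v := by
  have h1 := Finset.card_le_card (square_nbhd_subset G v)
  have h2 := Finset.card_union_le (G.neighborFinset v)
    ((G.neighborFinset v).biUnion (fun a => (G.neighborFinset a).erase v))
  have h3 := Finset.card_biUnion_le (s := G.neighborFinset v)
    (t := fun a => (G.neighborFinset a).erase v)
  have h4 : ∀ a ∈ G.neighborFinset v, ((G.neighborFinset a).erase v).card ≤ 1 := by
    intro a ha
    rw [mem_neighborFinset] at ha
    rw [Finset.card_erase_of_mem (by rw [mem_neighborFinset]; exact ha.symm)]
    have := hdeg a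
    rw [← card_neighborFinset_eq_degree] at this
    omega
  have h5 : ∑ a ∈ G.neighborFinset v, ((G.neighborFinset a).erase v).card
      ≤ ∑ _a ∈ G.neighborFinset v, 1 := Finset.sum_le_sum h4
  simp only [Finset.sum_const, smul_eq_mul, mul_one] at h5
  have := (card_neighborFinset_eq_degree (G := G.square) (v := v))
  rw [← card_neighborFinset_eq_degree, ← card_neighborFinset_eq_degree]
  omega

/-- in a graph where `a` has degree two and is adjacent to `v`, there is a unique
"other" neighbor. -/
lemma other_neighbor {v a : V} (h2 : G.degree a = 2) (hv : G.Adj v a) :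
    ∃ w, G.Adj a w ∧ w ≠ v ∧ G.neighborFinset a = {v, w} := by
  have hvmem : v ∈ G.neighborFinset a := by rw [mem_neighborFinset]; exact hv.symm
  have hcard : (G.neighborFinset a).card = 2 := by rw [card_neighborFinset_eq_degree]; exact h2
  have herase : ((G.neighborFinset a).erase v).card = 1 := by
    rw [Finset.card_erase_of_mem hvmem, hcard]
  obtain ⟨w, hw⟩ := Finset.card_eq_one.1 herase
  have hwmem : w ∈ (G.neighborFinset a).erase v := hw ▸ Finset.mem_singleton_self w
  obtain ⟨hwv, hwadj⟩ := Finset.mem_erase.1 hwmem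
  refine ⟨w, (mem_neighborFinset _ _ _).1 hwadj, hwv, ?_⟩
  apply Finset.Subset.antisymm
  · intro x hx
    rcases eq_or_ne x v with rfl | hxv
    · exact Finset.mem_insert_self _ _
    · have : x ∈ (G.neighborFinset a).erase v := Finset.mem_erase.2 ⟨hxv, hx⟩
      rw [hw, Finset.mem_singleton] at this
      simp [this]
  · intro x hx
    rcases Finset.mem_insert.1 hx with rfl | hx
    · exact hvmem
    · rw [Finset.mem_singleton] at hx; subst hx; exact hwadj

/-- A "closed" set of vertices in a graph where some external vertex has degree 2
forces at least 3 more vertices. -/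
lemma closed_set_bound (S : Finset V) (hS : ∀ u ∈ S, G.neighborFinset u ⊆ S)
    {x : V} (hx : x ∉ S) (hdx : G.degree x = 2) :
    S.card + 3 ≤ Fintype.card V := by
  have hsub : G.neighborFinset x ⊆ univ \ insert x S := by
    intro u hu
    rw [mem_neighborFinset] at hu
    refine Finset.mem_sdiff.2 ⟨mem_univ _, ?_⟩
    intro humem
    rcases Finset.mem_insert.1 humem with rfl | huS
    · exact G.irrefl hu
    · exact hx (hS u huS (by rw [mem_neighborFinset]; exact hu.symm))
  have h1 : (G.neighborFinset x).card = 2 := by rw [card_neighborFinset_eq_degree]; exact hdx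
  have h2 := Finset.card_le_card hsub
  have h3 : (univ \ insert x S).card = Fintype.card V - (S.card + 1) := by
    rw [Finset.card_sdiff_of_subset (Finset.subset_univ _), Finset.card_insert_of_notMem hx, card_univ]
  have h4 : (insert x S).card ≤ Fintype.card V := by
    rw [← card_univ]; exact Finset.card_le_card (Finset.subset_univ _)
  rw [Finset.card_insert_of_notMem hx] at h4
  omega

/-- the square-neighborhood is contained in the set of 4 candidate vertices. -/
lemma square_nbhd_subset4 {v a b a' b' : V}
    (hnv : G.neighborFinset v = {a, b}) (hna : G.neighborFinset a = {v, a'})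
    (hnb : G.neighborFinset b = {v, b'}) :
    G.square.neighborFinset v ⊆ {a, b, a', b'} := by
  intro u hu
  rw [mem_neighborFinset] at hu
  obtain ⟨hne, h | ⟨w, hw1, hw2⟩⟩ := hu
  · have : u ∈ G.neighborFinset v := by rwa [mem_neighborFinset]
    rw [hnv] at this
    rcases Finset.mem_insert.1 this with rfl | h'
    · exact Finset.mem_insert_self _ _
    · rw [Finset.mem_singleton] at h'; subst h'
      simp
  · have hw : w ∈ G.neighborFinset v := by rwa [mem_neighborFinset]
    rw [hnv] at hw
    rcases Finset.mem_insert.1 hw with rfl | hw'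
    · have : u ∈ G.neighborFinset w := by rw [mem_neighborFinset]; exact hw2
      rw [hna] at this
      rcases Finset.mem_insert.1 this with rfl | h'
      · exact absurd rfl hne
      · rw [Finset.mem_singleton] at h'; subst h'; simp
    · rw [Finset.mem_singleton] at hw'; subst hw'
      have : u ∈ G.neighborFinset w := by rw [mem_neighborFinset]; exact hw2
      rw [hnb] at this
      rcases Finset.mem_insert.1 this with rfl | h'
      · exact absurd rfl hne
      · rw [Finset.mem_singleton] at h'; subst h'; simp

lemma mem_square_nbhd_of_dist2 {v w u : V} (hvw : G.Adj v w) (hwu : G.Adj w u) (hne : u ≠ v) :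
    u ∈ G.square.neighborFinset v := by
  rw [mem_neighborFinset]
  exact ⟨(Ne.symm hne : v ≠ u), Or.inr ⟨w, hvw, hwu⟩⟩

lemma mem_square_nbhd_of_adj {v u : V} (hvu : G.Adj v u) :
    u ∈ G.square.neighborFinset v := by
  rw [mem_neighborFinset]
  exact ⟨hvu.ne, Or.inl hvu⟩


lemma card_triple_le (x y z : V) : ({x, y, z} : Finset V).card ≤ 3 := by
  apply le_trans (Finset.card_insert_le _ _)
  have := Finset.card_insert_le y ({z} : Finset V)
  simp at this ⊢
  omega

lemma fiveDistinct {v a b a' b' : V}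
    (hnv : G.neighborFinset v = {a, b}) (hna : G.neighborFinset a = {v, a'})
    (hnb : G.neighborFinset b = {v, b'}) (hab : a ≠ b) (ha'v : a' ≠ v) (hb'v : b' ≠ v)
    (hs : G.square.degree v = 4) : a' ≠ b ∧ b' ≠ a ∧ a' ≠ b' := by
  have hsub := square_nbhd_subset4 G hnv hna hnb
  have hcard : 4 ≤ ({a, b, a', b'} : Finset V).card := by
    have h1 : (G.square.neighborFinset v).card = 4 := by
      rw [card_neighborFinset_eq_degree]; exact hs
    rw [← h1]; exact Finset.card_le_card hsub
  refine ⟨?_, ?_, ?_⟩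
  · intro h
    have hsub2 : ({a, b, a', b'} : Finset V) ⊆ {a, b, b'} := by
      intro x hx; simp [h] at hx ⊢; tauto
    have := le_trans hcard (le_trans (Finset.card_le_card hsub2) (card_triple_le a b b'))
    omega
  · intro h
    have hsub2 : ({a, b, a', b'} : Finset V) ⊆ {a, b, a'} := by
      intro x hx; simp [h] at hx ⊢; tauto
    have := le_trans hcard (le_trans (Finset.card_le_card hsub2) (card_triple_le a b a'))
    omega
  · intro h
    have hsub2 : ({a, b, a', b'} : Finset V) ⊆ {a, b, b'} := by
      intro x hx; simp [h] at hx ⊢; tauto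
    have := le_trans hcard (le_trans (Finset.card_le_card hsub2) (card_triple_le a b b'))
    omega

lemma threeDistinct {v a b a' b' : V}
    (hnv : G.neighborFinset v = {a, b}) (hna : G.neighborFinset a = {v, a'})
    (hnb : G.neighborFinset b = {v, b'}) (hab : a ≠ b) (ha'v : a' ≠ v) (hb'v : b' ≠ v)
    (hs : G.square.degree v = 3) : a' = b' ∧ a' ≠ a ∧ a' ≠ b ∧ b' ≠ a ∧ b' ≠ b := by
  have hva : G.Adj v a := by
    rw [← mem_neighborFinset, hnv]; exact Finset.mem_insert_self _ _
  have hvb : G.Adj v b := by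
    rw [← mem_neighborFinset, hnv]; simp
  have haa' : G.Adj a a' := by
    rw [← mem_neighborFinset, hna]; simp
  have hbb' : G.Adj b b' := by
    rw [← mem_neighborFinset, hnb]; simp
  have hcard3 : (G.square.neighborFinset v).card = 3 := by
    rw [card_neighborFinset_eq_degree]; exact hs
  have ha'a : a' ≠ a := haa'.ne'
  have hb'b : b' ≠ b := hbb'.ne'
  have ha'b : a' ≠ b := by
    intro h
    have hab2 : G.Adj a b := h ▸ haa'
    have hmem : a ∈ G.neighborFinset b := by rw [mem_neighborFinset]; exact hab2.symm
    rw [hnb] at hmem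
    rcases Finset.mem_insert.1 hmem with h1 | h1
    · exact hva.ne' h1
    · rw [Finset.mem_singleton] at h1
      have hsub := square_nbhd_subset4 G hnv hna hnb
      have hsub2 : ({a, b, a', b'} : Finset V) ⊆ {a, b} := by
        intro x hx; simp [h, ← h1] at hx ⊢; tauto
      have h2 := Finset.card_le_card (hsub.trans hsub2)
      have h3 := Finset.card_insert_le a ({b} : Finset V)
      simp at h3
      omega
  have hb'a : b' ≠ a := by
    intro h
    have hba : G.Adj b a := h ▸ hbb'
    have hmem : b ∈ G.neighborFinset a := by rw [mem_neighborFinset]; exact hba.symm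
    rw [hna] at hmem
    rcases Finset.mem_insert.1 hmem with h1 | h1
    · exact hvb.ne' h1
    · rw [Finset.mem_singleton] at h1
      exact ha'b h1.symm
  refine ⟨?_, ha'a, ha'b, hb'a, hb'b⟩
  by_contra ha'b'
  -- then {a, b, a', b'} are 4 distinct elements of the square nbhd, card 3
  have hsup : ({a, b, a', b'} : Finset V) ⊆ G.square.neighborFinset v := by
    intro x hx
    simp only [Finset.mem_insert, Finset.mem_singleton] at hx
    rcases hx with rfl | rfl | rfl | rfl
    · exact mem_square_nbhd_of_adj G hva
    · exact mem_square_nbhd_of_adj G hvb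
    · exact mem_square_nbhd_of_dist2 G hva haa' ha'v
    · exact mem_square_nbhd_of_dist2 G hvb hbb' hb'v
  have hc4 : ({a, b, a', b'} : Finset V).card = 4 := by
    rw [Finset.card_insert_of_notMem (by simp [hab, ha'a.symm, hb'a.symm]),
      Finset.card_insert_of_notMem (by simp [ha'b.symm, hb'b.symm]),
      Finset.card_insert_of_notMem (by simp [ha'b']),
      Finset.card_singleton]
  have := Finset.card_le_card hsup
  omega


lemma case6 (hcard : Fintype.card V = 6) (hd2 : ∀ v, G.degree v = 2)
    (hs3 : ∀ v, G.square.degree v = 3) : False := by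
  have hne : Nonempty V := Fintype.card_pos_iff.1 (by omega)
  obtain ⟨v0⟩ := hne
  have hdv : (G.neighborFinset v0).card = 2 := by
    rw [card_neighborFinset_eq_degree]; exact hd2 v0
  obtain ⟨a, b, hab, hnv⟩ := Finset.card_eq_two.1 hdv
  have hva : G.Adj v0 a := by rw [← mem_neighborFinset, hnv]; simp
  have hvb : G.Adj v0 b := by rw [← mem_neighborFinset, hnv]; simp
  obtain ⟨a', haa', ha'v, hna⟩ := other_neighbor G (hd2 a) hva
  obtain ⟨b', hbb', hb'v, hnb⟩ := other_neighbor G (hd2 b) hvb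
  obtain ⟨heq, ha'a, ha'b, hb'a, hb'b⟩ :=
    threeDistinct G hnv hna hnb hab ha'v hb'v (hs3 v0)
  subst heq
  have hna' : G.neighborFinset a' = {a, b} := by
    have hsub : ({a, b} : Finset V) ⊆ G.neighborFinset a' := by
      intro x hx
      rcases Finset.mem_insert.1 hx with rfl | hx
      · rw [mem_neighborFinset]; exact haa'.symm
      · rw [Finset.mem_singleton] at hx; subst hx
        rw [mem_neighborFinset]; exact hbb'.symm
    have h1 : ({a, b} : Finset V).card = 2 := Finset.card_pair hab
    have h2 : (G.neighborFinset a').card = 2 := by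
      rw [card_neighborFinset_eq_degree]; exact hd2 a'
    exact (Finset.eq_of_subset_of_card_le hsub (by omega)).symm
  have hclosed : ∀ u ∈ ({v0, a, b, a'} : Finset V),
      G.neighborFinset u ⊆ ({v0, a, b, a'} : Finset V) := by
    intro u hu
    simp only [Finset.mem_insert, Finset.mem_singleton] at hu
    rcases hu with rfl | rfl | rfl | rfl
    · rw [hnv]; intro x hx; simp at hx ⊢; tauto
    · rw [hna]; intro x hx; simp at hx ⊢; tauto
    · rw [hnb]; intro x hx; simp at hx ⊢; tauto
    · rw [hna']; intro x hx; simp at hx ⊢; tauto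
  have hcardS : ({v0, a, b, a'} : Finset V).card = 4 := by
    rw [Finset.card_insert_of_notMem (by simp [hva.ne, hvb.ne, Ne.symm ha'v]),
      Finset.card_insert_of_notMem (by simp [hab, Ne.symm ha'a]),
      Finset.card_insert_of_notMem (by simp [Ne.symm ha'b]),
      Finset.card_singleton]
  obtain ⟨x, hx⟩ : ∃ x, x ∉ ({v0, a, b, a'} : Finset V) := by
    by_contra h
    push_neg at h
    have := Finset.card_le_card (fun y _ => h y : (univ : Finset V) ⊆ {v0, a, b, a'})
    rw [Finset.card_univ, hcard, hcardS] at this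
    omega
  have := closed_set_bound G {v0, a, b, a'} hclosed hx (hd2 x)
  omega


set_option maxHeartbeats 1000000 in
lemma case7 (hcard : Fintype.card V = 7) (hd2 : ∀ v, G.degree v = 2)
    (hs4 : ∀ v, G.square.degree v = 4) : Nonempty (G ≃g cycleGraph 7) := by
  have hne : Nonempty V := Fintype.card_pos_iff.1 (by omega)
  obtain ⟨v0⟩ := hne
  have hdv : (G.neighborFinset v0).card = 2 := by
    rw [card_neighborFinset_eq_degree]; exact hd2 v0
  obtain ⟨v1, u, h1u, hnv0⟩ := Finset.card_eq_two.1 hdv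
  have h01 : G.Adj v0 v1 := by rw [← mem_neighborFinset, hnv0]; simp
  have h0u : G.Adj v0 u := by rw [← mem_neighborFinset, hnv0]; simp
  obtain ⟨v2, h12, h20, hn1⟩ := other_neighbor G (hd2 v1) h01
  obtain ⟨u', huu', hu'0, hnu⟩ := other_neighbor G (hd2 u) h0u
  obtain ⟨v3, h23, h31, hn2⟩ := other_neighbor G (hd2 v2) h12
  obtain ⟨v4, h34, h42, hn3⟩ := other_neighbor G (hd2 v3) h23
  obtain ⟨v5, h45, h53, hn4⟩ := other_neighbor G (hd2 v4) h34
  obtain ⟨v6, h56, h64, hn5⟩ := other_neighbor G (hd2 v5) h45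
  obtain ⟨w, h6w, hw5, hn6⟩ := other_neighbor G (hd2 v6) h56
  obtain ⟨h2u, hu'1, h2u'⟩ := fiveDistinct G hnv0 hn1 hnu h1u h20 hu'0 (hs4 v0)
  obtain ⟨-, h30, hu3⟩ := fiveDistinct G hn1 hnv0 hn2 (Ne.symm h20) (Ne.symm h1u) h31 (hs4 v1)
  obtain ⟨-, h41, h04⟩ := fiveDistinct G hn2 (hn1.trans (Finset.pair_comm v0 v2)) hn3
    (Ne.symm h31) (Ne.symm h20) h42 (hs4 v2)
  obtain ⟨h14, h52, h15⟩ := fiveDistinct G hn3 (hn2.trans (Finset.pair_comm v1 v3)) hn4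
    (Ne.symm h42) (Ne.symm h31) h53 (hs4 v3)
  obtain ⟨h25, h63, h26⟩ := fiveDistinct G hn4 (hn3.trans (Finset.pair_comm v2 v4)) hn5
    (Ne.symm h53) (Ne.symm h42) h64 (hs4 v4)
  obtain ⟨h36, hw4, h3w⟩ := fiveDistinct G hn5 (hn4.trans (Finset.pair_comm v3 v5)) hn6
    (Ne.symm h64) (Ne.symm h53) hw5 (hs4 v5)
  -- v5 ≠ v0
  have h50 : v5 ≠ v0 := by
    intro h
    have hmem : v4 ∈ G.neighborFinset v0 := by
      rw [mem_neighborFinset]; exact (h ▸ h45).symm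
    rw [hnv0] at hmem
    rcases Finset.mem_insert.1 hmem with h' | h'
    · exact h41 h'
    · rw [Finset.mem_singleton] at h'
      rw [← h'] at hnv0
      rw [h] at hn4
      have hclosed : ∀ z ∈ ({v0, v1, v2, v3, v4} : Finset V),
          G.neighborFinset z ⊆ ({v0, v1, v2, v3, v4} : Finset V) := by
        intro z hz
        simp only [Finset.mem_insert, Finset.mem_singleton] at hz
        rcases hz with rfl | rfl | rfl | rfl | rfl
        · rw [hnv0]; intro x hx; simp at hx ⊢; tauto
        · rw [hn1]; intro x hx; simp at hx ⊢; tauto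
        · rw [hn2]; intro x hx; simp at hx ⊢; tauto
        · rw [hn3]; intro x hx; simp at hx ⊢; tauto
        · rw [hn4]; intro x hx; simp at hx ⊢; tauto
      have hcardS : ({v0, v1, v2, v3, v4} : Finset V).card = 5 := by
        rw [Finset.card_insert_of_notMem
            (by simp [h01.ne, Ne.symm h20, Ne.symm h30, h04]),
          Finset.card_insert_of_notMem (by simp [h12.ne, Ne.symm h31, Ne.symm h41]),
          Finset.card_insert_of_notMem (by simp [h23.ne, Ne.symm h42]),
          Finset.card_insert_of_notMem (by simp [h34.ne]),
          Finset.card_singleton]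
      obtain ⟨x, hx⟩ : ∃ x, x ∉ ({v0, v1, v2, v3, v4} : Finset V) := by
        by_contra hc
        push_neg at hc
        have := Finset.card_le_card
          (fun y _ => hc y : (univ : Finset V) ⊆ {v0, v1, v2, v3, v4})
        rw [Finset.card_univ, hcard, hcardS] at this
        omega
      have := closed_set_bound G {v0, v1, v2, v3, v4} hclosed hx (hd2 x)
      omega
  -- v6 ≠ v1
  have h61 : v6 ≠ v1 := by
    intro h
    have hmem : v5 ∈ G.neighborFinset v1 := by
      rw [mem_neighborFinset]; exact (h ▸ h56).symm
    rw [hn1] at hmem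
    rcases Finset.mem_insert.1 hmem with h' | h'
    · exact h50 h'
    · rw [Finset.mem_singleton] at h'
      exact h52 h'
  -- v6 ≠ v0
  have h60 : v6 ≠ v0 := by
    intro h
    have hmem : v5 ∈ G.neighborFinset v0 := by
      rw [mem_neighborFinset]; exact (h ▸ h56).symm
    rw [hnv0] at hmem
    rcases Finset.mem_insert.1 hmem with h' | h'
    · exact (Ne.symm h15) h'
    · rw [Finset.mem_singleton] at h'
      rw [← h'] at hnv0
      rw [h] at hn5
      have hclosed : ∀ z ∈ ({v0, v1, v2, v3, v4, v5} : Finset V),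
          G.neighborFinset z ⊆ ({v0, v1, v2, v3, v4, v5} : Finset V) := by
        intro z hz
        simp only [Finset.mem_insert, Finset.mem_singleton] at hz
        rcases hz with rfl | rfl | rfl | rfl | rfl | rfl
        · rw [hnv0]; intro x hx; simp at hx ⊢; tauto
        · rw [hn1]; intro x hx; simp at hx ⊢; tauto
        · rw [hn2]; intro x hx; simp at hx ⊢; tauto
        · rw [hn3]; intro x hx; simp at hx ⊢; tauto
        · rw [hn4]; intro x hx; simp at hx ⊢; tauto
        · rw [hn5]; intro x hx; simp at hx ⊢; tauto
      have hcardS : ({v0, v1, v2, v3, v4, v5} : Finset V).card = 6 := by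
        rw [Finset.card_insert_of_notMem
            (by simp [h01.ne, Ne.symm h20, Ne.symm h30, h04, Ne.symm h50]),
          Finset.card_insert_of_notMem (by simp [h12.ne, Ne.symm h31, Ne.symm h41, h15]),
          Finset.card_insert_of_notMem (by simp [h23.ne, Ne.symm h42, Ne.symm h52]),
          Finset.card_insert_of_notMem (by simp [h34.ne, Ne.symm h53]),
          Finset.card_insert_of_notMem (by simp [h45.ne]),
          Finset.card_singleton]
      obtain ⟨x, hx⟩ : ∃ x, x ∉ ({v0, v1, v2, v3, v4, v5} : Finset V) := by
        by_contra hc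
        push_neg at hc
        have := Finset.card_le_card
          (fun y _ => hc y : (univ : Finset V) ⊆ {v0, v1, v2, v3, v4, v5})
        rw [Finset.card_univ, hcard, hcardS] at this
        omega
      have := closed_set_bound G {v0, v1, v2, v3, v4, v5} hclosed hx (hd2 x)
      omega
  -- now all seven are distinct
  have hcardS : ({v0, v1, v2, v3, v4, v5, v6} : Finset V).card = 7 := by
    rw [Finset.card_insert_of_notMem
        (by simp [h01.ne, Ne.symm h20, Ne.symm h30, h04, Ne.symm h50, Ne.symm h60]),
      Finset.card_insert_of_notMem
        (by simp [h12.ne, Ne.symm h31, Ne.symm h41, h15, Ne.symm h61]),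
      Finset.card_insert_of_notMem (by simp [h23.ne, Ne.symm h42, Ne.symm h52, h26]),
      Finset.card_insert_of_notMem (by simp [h34.ne, Ne.symm h53, Ne.symm h63]),
      Finset.card_insert_of_notMem (by simp [h45.ne, Ne.symm h64]),
      Finset.card_insert_of_notMem (by simp [h56.ne]),
      Finset.card_singleton]
  have hSuniv : ({v0, v1, v2, v3, v4, v5, v6} : Finset V) = univ :=
    Finset.eq_univ_of_card _ (by rw [hcardS, hcard])
  -- the closing edge: w = v0
  have hw0 : w = v0 := by
    have hwmem : w ∈ ({v0, v1, v2, v3, v4, v5, v6} : Finset V) := by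
      rw [hSuniv]; exact Finset.mem_univ w
    simp only [Finset.mem_insert, Finset.mem_singleton] at hwmem
    rcases hwmem with h | h | h | h | h | h | h
    · exact h
    · exfalso
      have : v6 ∈ G.neighborFinset v1 := by
        rw [mem_neighborFinset]; exact (h ▸ h6w).symm
      rw [hn1] at this
      rcases Finset.mem_insert.1 this with h' | h'
      · exact h60 h'
      · rw [Finset.mem_singleton] at h'; exact (Ne.symm h26) h'
    · exfalso
      have : v6 ∈ G.neighborFinset v2 := by
        rw [mem_neighborFinset]; exact (h ▸ h6w).symm
      rw [hn2] at this
      rcases Finset.mem_insert.1 this with h' | h'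
      · exact h61 h'
      · rw [Finset.mem_singleton] at h'; exact h63 h'
    · exfalso
      have : v6 ∈ G.neighborFinset v3 := by
        rw [mem_neighborFinset]; exact (h ▸ h6w).symm
      rw [hn3] at this
      rcases Finset.mem_insert.1 this with h' | h'
      · exact (Ne.symm h26) h'
      · rw [Finset.mem_singleton] at h'; exact h64 h'
    · exfalso
      have : v6 ∈ G.neighborFinset v4 := by
        rw [mem_neighborFinset]; exact (h ▸ h6w).symm
      rw [hn4] at this
      rcases Finset.mem_insert.1 this with h' | h'
      · exact h63 h'
      · rw [Finset.mem_singleton] at h'; exact h56.ne' h'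
    · exact absurd h hw5
    · exact absurd h h6w.ne'
  rw [hw0] at h6w hn6
  -- identify u with v6
  have hu6 : u = v6 := by
    have : v6 ∈ G.neighborFinset v0 := by
      rw [mem_neighborFinset]; exact h6w.symm
    rw [hnv0] at this
    rcases Finset.mem_insert.1 this with h' | h'
    · exact absurd h' h61
    · rw [Finset.mem_singleton] at h'; exact h'.symm
  rw [hu6] at hnv0
  -- build the isomorphism
  have hlen : ([v0, v1, v2, v3, v4, v5, v6] : List V).length = 7 := rfl
  have hnd : ([v0, v1, v2, v3, v4, v5, v6] : List V).Nodup := by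
    simp [h01.ne, Ne.symm h20, Ne.symm h30, h04, Ne.symm h50, Ne.symm h60,
      h12.ne, Ne.symm h31, Ne.symm h41, h15, Ne.symm h61,
      h23.ne, Ne.symm h42, Ne.symm h52, h26,
      h34.ne, Ne.symm h53, Ne.symm h63,
      h45.ne, Ne.symm h64, h56.ne]
  set f : Fin 7 → V := fun i => ([v0, v1, v2, v3, v4, v5, v6] : List V).get (Fin.cast hlen.symm i)
    with hf
  have hinj : Function.Injective f := by
    intro i j h
    have := (List.Nodup.get_inj_iff hnd).1 h
    exact Fin.cast_injective _ this
  have hbij : Function.Bijective f :=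
    (Fintype.bijective_iff_injective_and_card f).2 ⟨hinj, by simp [hcard]⟩
  have hnbf : ∀ i : Fin 7, G.neighborFinset (f i) = {f (i + 1), f (i - 1)} := by
    intro i
    fin_cases i
    · exact hnv0
    · exact hn1.trans (Finset.pair_comm v0 v2)
    · exact hn2.trans (Finset.pair_comm v1 v3)
    · exact hn3.trans (Finset.pair_comm v2 v4)
    · exact hn4.trans (Finset.pair_comm v3 v5)
    · exact hn5.trans (Finset.pair_comm v4 v6)
    · exact hn6.trans (Finset.pair_comm v5 v0)
  have hcyc : ∀ i j : Fin 7, (cycleGraph 7).Adj i j ↔ (j = i + 1 ∨ j = i - 1) := by decide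
  have h_adj : ∀ i j : Fin 7, G.Adj (f i) (f j) ↔ (cycleGraph 7).Adj i j := by
    intro i j
    rw [hcyc, ← mem_neighborFinset, hnbf i]
    simp only [Finset.mem_insert, Finset.mem_singleton]
    rw [hinj.eq_iff, hinj.eq_iff]
  exact ⟨(RelIso.mk (Equiv.ofBijective f hbij) (fun {a b} => h_adj a b)
    : cycleGraph 7 ≃g G).symm⟩


end SqucoAux

namespace SqucoAux
variable {V : Type*} [Fintype V] [DecidableEq V] (G : SimpleGraph V) [DecidableRel G.Adj]

lemma multiset_map_univ_equiv {W : Type*} [Fintype W] (g : W ≃ V) :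
    Multiset.map g univ.val = (univ : Finset V).val := by
  have := Finset.map_univ_equiv g
  calc Multiset.map g univ.val = (Finset.map g.toEmbedding univ).val := by simp [Finset.map]
    _ = univ.val := by rw [this]

lemma sqAdjN_code {n : ℕ} (e : V ≃ Fin n) (i j : Fin n) :
    sqAdjN n (code G e) i j = true ↔ G.square.Adj (e.symm i) (e.symm j) := by
  rw [show G.square.Adj (e.symm i) (e.symm j) ↔ (e.symm i ≠ e.symm j ∧
    (G.Adj (e.symm i) (e.symm j) ∨ ∃ w, G.Adj (e.symm i) w ∧ G.Adj w (e.symm j)))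
    from Iff.rfl]
  simp only [sqAdjN, Bool.and_eq_true, Bool.or_eq_true, decide_eq_true_eq,
    List.any_eq_true, List.mem_finRange, true_and, adjN_code G e]
  constructor
  · rintro ⟨hne, h⟩
    refine ⟨e.symm.injective.ne hne, ?_⟩
    rcases h with h | ⟨x, hx1, hx2⟩
    · exact Or.inl h
    · exact Or.inr ⟨e.symm x, hx1, hx2⟩
  · rintro ⟨hne, h⟩
    refine ⟨fun hh => hne (by rw [hh]), ?_⟩
    rcases h with h | ⟨w, hw1, hw2⟩
    · exact Or.inl h
    · exact Or.inr ⟨e w, by simpa using hw1, by simpa using hw2⟩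

lemma coAdjN_code {n : ℕ} (e : V ≃ Fin n) (i j : Fin n) :
    ((decide (i ≠ j)) && !adjN (code G e) i j) = true ↔ Gᶜ.Adj (e.symm i) (e.symm j) := by
  rw [compl_adj]
  simp only [Bool.and_eq_true, Bool.not_eq_true', decide_eq_true_eq]
  constructor
  · rintro ⟨hne, h⟩
    refine ⟨e.symm.injective.ne hne, fun hadj => ?_⟩
    have h2 := (adjN_code G e i j).2 hadj
    rw [h] at h2
    exact absurd h2 (by simp)
  · rintro ⟨hne, h⟩
    refine ⟨fun hh => hne (by rw [hh]), ?_⟩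
    cases hval : adjN (code G e) i j
    · rfl
    · exact absurd ((adjN_code G e i j).1 hval) h

lemma okN_code_false {n : ℕ} (e : V ≃ Fin n) (hd : ∀ v, G.degree v ≤ 2)
    (hms : Multiset.map (fun v => G.square.degree v) univ.val
      = Multiset.map (fun v => Gᶜ.degree v) univ.val) :
    okN n (code G e) = false := by
  have hdeg : ∀ i : Fin n, degN n (code G e) i = G.degree (e.symm i) := fun i =>
    countP_eq_degree e _ G (e.symm i) (fun j => adjN_code G e i j)
  have hsq : ∀ i : Fin n, sqDegN n (code G e) i = G.square.degree (e.symm i) := fun i =>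
    countP_eq_degree e _ G.square (e.symm i) (fun j => sqAdjN_code G e i j)
  have hco : ∀ i : Fin n, coDegN n (code G e) i = Gᶜ.degree (e.symm i) := fun i =>
    countP_eq_degree e _ Gᶜ (e.symm i) (fun j => coAdjN_code G e i j)
  have huniv : (univ : Finset (Fin n)).val = ↑(List.finRange n) := by
    rw [Fin.univ_def]
  have hkey : ∀ d : ℕ, ((List.finRange n).map (sqDegN n (code G e))).count d
      = ((List.finRange n).map (coDegN n (code G e))).count d := by
    intro d
    have e1 : (List.finRange n).map (sqDegN n (code G e))
        = (List.finRange n).map (fun i => G.square.degree (e.symm i)) :=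
      List.map_congr_left (fun i _ => hsq i)
    have e2 : (List.finRange n).map (coDegN n (code G e))
        = (List.finRange n).map (fun i => Gᶜ.degree (e.symm i)) :=
      List.map_congr_left (fun i _ => hco i)
    rw [e1, e2, ← Multiset.coe_count, ← Multiset.coe_count]
    have e3 : ∀ (H : ℕ → ℕ → Prop), True := fun _ => trivial
    have m1 : (↑((List.finRange n).map (fun i => G.square.degree (e.symm i))) : Multiset ℕ)
        = Multiset.map (fun v => G.square.degree v) univ.val := by
      rw [← Multiset.map_coe, ← huniv,
        show (fun i : Fin n => G.square.degree (e.symm i))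
          = (fun v => G.square.degree v) ∘ e.symm from rfl,
        ← Multiset.map_map, multiset_map_univ_equiv (e.symm : Fin n ≃ V)]
    have m2 : (↑((List.finRange n).map (fun i => Gᶜ.degree (e.symm i))) : Multiset ℕ)
        = Multiset.map (fun v => Gᶜ.degree v) univ.val := by
      rw [← Multiset.map_coe, ← huniv,
        show (fun i : Fin n => Gᶜ.degree (e.symm i))
          = (fun v => Gᶜ.degree v) ∘ e.symm from rfl,
        ← Multiset.map_map, multiset_map_univ_equiv (e.symm : Fin n ≃ V)]
    rw [m1, m2, hms]
  have h1 : ((List.finRange n).all (fun i => degN n (code G e) i ≤ 2)) = true := by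
    rw [List.all_eq_true]
    intro i _
    simpa [hdeg i] using hd (e.symm i)
  have h2 : ((List.range n).all (fun d =>
      ((List.finRange n).map (sqDegN n (code G e))).count d
        == ((List.finRange n).map (coDegN n (code G e))).count d)) = true := by
    rw [List.all_eq_true]
    intro d _
    simpa using hkey d
  rw [okN, h1, h2]
  rfl

/-- isomorphisms carry over to squares -/
def isoSquare {W : Type*} {A : SimpleGraph V} {B : SimpleGraph W} (φ : A ≃g B) :
    A.square ≃g B.square where
  toEquiv := φ.toEquiv
  map_rel_iff' := by
    intro a b
    constructor
    · rintro ⟨hne, h | ⟨w, hw1, hw2⟩⟩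
      · exact ⟨fun h' => hne (congrArg φ h'), Or.inl (φ.map_rel_iff.1 h)⟩
      · refine ⟨fun h' => hne (congrArg φ h'), Or.inr ⟨φ.symm w, ?_, ?_⟩⟩
        · exact φ.map_rel_iff.1 (by simpa using hw1)
        · exact φ.map_rel_iff.1 (by simpa using hw2)
    · rintro ⟨hne, h | ⟨w, hw1, hw2⟩⟩
      · exact ⟨fun h' => hne (φ.toEquiv.injective h'), Or.inl (φ.map_rel_iff.2 h)⟩
      · exact ⟨fun h' => hne (φ.toEquiv.injective h'),
          Or.inr ⟨φ w, φ.map_rel_iff.2 hw1, φ.map_rel_iff.2 hw2⟩⟩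

/-- isomorphisms carry over to complements -/
def isoCompl {W : Type*} {A : SimpleGraph V} {B : SimpleGraph W} (φ : A ≃g B) :
    Aᶜ ≃g Bᶜ where
  toEquiv := φ.toEquiv
  map_rel_iff' := by
    intro a b
    simp only [compl_adj]
    constructor
    · rintro ⟨hne, h⟩
      exact ⟨fun h' => hne (congrArg φ h'), fun h' => h (φ.map_rel_iff.2 h')⟩
    · rintro ⟨hne, h⟩
      exact ⟨fun h' => hne (φ.toEquiv.injective h'), fun h' => h (φ.map_rel_iff.1 h')⟩

/-- `C7` is square-complementary, via multiplication by 2. -/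
def c7squco : (cycleGraph 7).square ≃g (cycleGraph 7)ᶜ where
  toEquiv := ⟨fun i => 2*i, fun j => 4*j, by decide, by decide⟩
  map_rel_iff' := by
    intro a b
    exact (by decide :
      ∀ a b : Fin 7, ((cycleGraph 7)ᶜ.Adj (2*a) (2*b) ↔ (cycleGraph 7).square.Adj a b)) a b

end SqucoAux

open SqucoAux in
/-- The only nontrivial square-complementary graph with maximum degree at most 2
is the 7-cycle. -/
theorem isSquco_maxDegree_le_two_iff {V : Type*} [Fintype V] [Nontrivial V]
    (G : SimpleGraph V) [DecidableRel G.Adj] (hdeg : G.maxDegree ≤ 2) :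
    G.IsSquco ↔ Nonempty (G ≃g cycleGraph 7) := by
  letI : DecidableEq V := Classical.decEq V
  constructor
  · rintro ⟨φ⟩
    have hd : ∀ v, G.degree v ≤ 2 := fun v => le_trans (G.degree_le_maxDegree v) hdeg
    have hms : Multiset.map (fun v => G.square.degree v) univ.val
        = Multiset.map (fun v => Gᶜ.degree v) univ.val :=
      iso_degree_multiset _ _ φ
    have key : ∀ v, ∃ u, G.square.degree v = Gᶜ.degree u := by
      intro v
      have hv : G.square.degree v ∈ Multiset.map (fun v => G.square.degree v) univ.val :=
        Multiset.mem_map_of_mem _ (by rw [Finset.mem_val]; exact mem_univ v)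
      rw [hms] at hv
      obtain ⟨u, -, hu⟩ := Multiset.mem_map.1 hv
      exact ⟨u, hu.symm⟩
    have hco : ∀ u, Gᶜ.degree u = Fintype.card V - 1 - G.degree u := fun u =>
      G.degree_compl u
    have hdlt : ∀ v, G.degree v ≤ Fintype.card V - 1 := fun v => by
      have := G.degree_lt_card_verts v; omega
    have hsum : (∑ v, G.square.degree v) = ∑ v, Gᶜ.degree v := by
      have h := congrArg Multiset.sum hms
      rw [Finset.sum_eq_multiset_sum, Finset.sum_eq_multiset_sum]
      exact h
    have hAB : (∑ v, Gᶜ.degree v) + (∑ v, G.degree v)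
        = Fintype.card V * (Fintype.card V - 1) := by
      rw [← Finset.sum_add_distrib]
      rw [Finset.sum_congr rfl (fun v _ => show Gᶜ.degree v + G.degree v
        = Fintype.card V - 1 by rw [hco v]; have := hdlt v; omega)]
      rw [Finset.sum_const, card_univ, smul_eq_mul]
    have hDle : (∑ v, G.degree v) ≤ 2 * Fintype.card V := by
      calc (∑ v, G.degree v) ≤ ∑ _v : V, 2 := Finset.sum_le_sum (fun v _ => hd v)
        _ = 2 * Fintype.card V := by rw [Finset.sum_const, card_univ, smul_eq_mul, mul_comm]
    have hsqle : (∑ v, G.square.degree v) ≤ 2 * (∑ v, G.degree v) := by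
      rw [Finset.mul_sum]
      exact Finset.sum_le_sum (fun v _ => square_degree_le G hd v)
    have hn2 : 2 ≤ Fintype.card V := Fintype.one_lt_card
    have hn7 : Fintype.card V ≤ 7 := by
      by_contra hgt
      push_neg at hgt
      have h1 : Fintype.card V * 7 ≤ Fintype.card V * (Fintype.card V - 1) :=
        Nat.mul_le_mul_left _ (by omega)
      have h2 : Fintype.card V * (Fintype.card V - 1) ≤ 6 * Fintype.card V := by
        rw [← hAB, ← hsum]
        omega
      have h3 : Fintype.card V * 7 = 7 * Fintype.card V := by ring
      omega
    -- rule out the small cases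
    have hsmall : ∀ k : ℕ, k < 6 → Fintype.card V = k → False := by
      intro k hk hcV
      have e := Fintype.equivFinOfCardEq hcV
      have hfalse := okN_code_false G e hd hms
      interval_cases k
      · omega
      · omega
      · have := good2 (code G e) (code_lt G e); rw [hfalse] at this; simp at this
      · have := good3 (code G e) (code_lt G e); rw [hfalse] at this; simp at this
      · have := good4 (code G e) (code_lt G e); rw [hfalse] at this; simp at this
      · have := good5 (code G e) (code_lt G e); rw [hfalse] at this; simp at this
    have h67 : Fintype.card V = 6 ∨ Fintype.card V = 7 := by
      rcases Nat.lt_or_ge (Fintype.card V) 6 with h | h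
      · exact absurd (hsmall _ h rfl) id
      · omega
    rcases h67 with hcV | hcV
    · exfalso
      have hd2 : ∀ v, G.degree v = 2 := by
        intro v
        by_contra hne
        have hle1 : G.degree v ≤ 1 := by have := hd v; omega
        have h1 : G.square.degree v ≤ 2 := by
          have := square_degree_le G hd v; omega
        obtain ⟨u, hu⟩ := key v
        rw [hco u, hcV] at hu
        have := hd u
        omega
      have hs3 : ∀ v, G.square.degree v = 3 := by
        intro v
        obtain ⟨u, hu⟩ := key v
        rw [hco u, hcV, hd2 u] at hu
        exact hu
      exact case6 G hcV hd2 hs3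
    · have hd2 : ∀ v, G.degree v = 2 := by
        intro v
        by_contra hne
        have hle1 : G.degree v ≤ 1 := by have := hd v; omega
        have h1 : G.square.degree v ≤ 2 := by
          have := square_degree_le G hd v; omega
        obtain ⟨u, hu⟩ := key v
        rw [hco u, hcV] at hu
        have := hd u
        omega
      have hs4 : ∀ v, G.square.degree v = 4 := by
        intro v
        obtain ⟨u, hu⟩ := key v
        rw [hco u, hcV, hd2 u] at hu
        exact hu
      exact case7 G hcV hd2 hs4
  · rintro ⟨ψ⟩
    exact ⟨(isoSquare ψ).trans (c7squco.trans (isoCompl ψ).symm)⟩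
end

section
/- If G is a bipartite square-complementary graph with bipartition {A,B}, then every two distinct vertices in A have a common neighbor (which lies in B). -/
open SimpleGraph

/-- `{A, B}` is a bipartition of `G`: the two sets partition the vertex set and
every edge of `G` joins a vertex of `A` to a vertex of `B`. -/
def SimpleGraph.IsBipartitionOf {V : Type*} (G : SimpleGraph V) (A B : Set V) : Prop :=
  (∀ v, v ∈ A ↔ v ∉ B) ∧ ∀ ⦃u v⦄, G.Adj u v → (u ∈ A ∧ v ∈ B) ∨ (u ∈ B ∧ v ∈ A)

/-- In a bipartite square-complementary graph with bipartition `{A, B}`, every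
two distinct vertices of `A` have a common neighbor, which lies in `B`. -/
theorem isSquco_bipartite_common_neighbor {V : Type*} [Fintype V] (G : SimpleGraph V)
    {A B : Set V} (hbip : G.IsBipartitionOf A B) (h : G.IsSquco) :
    ∀ a₁ ∈ A, ∀ a₂ ∈ A, a₁ ≠ a₂ → ∃ b ∈ B, G.Adj a₁ b ∧ G.Adj a₂ b := by
  intro x hx y hy hxy
  by_contra hcon
  obtain ⟨φ⟩ := h
  obtain ⟨hAB, hedge⟩ := hbip
  -- every edge from a vertex of `A` lands in `B`
  have memB : ∀ {u w : V}, u ∈ A → G.Adj u w → w ∈ B := by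
    intro u w hu hadj
    rcases hedge hadj with ⟨_, h2⟩ | ⟨h1, _⟩
    · exact h2
    · exact absurd h1 ((hAB u).mp hu)
  have noadjAA : ∀ {a a' : V}, a ∈ A → a' ∈ A → ¬ G.Adj a a' := by
    intro a a' ha ha' hadj
    rcases hedge hadj with ⟨_, h2⟩ | ⟨h1, _⟩
    · exact (hAB a').mp ha' h2
    · exact (hAB a).mp ha h1
  -- x, y have no common neighbor at all
  have hc : ∀ w, ¬ (G.Adj x w ∧ G.Adj y w) := by
    intro w hw
    exact hcon ⟨w, memB hx hw.1, hw⟩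
  -- the key bridge: `G.Adj (φ u) (φ v)` iff u, v are at distance ≥ 3 in G
  have far_iff : ∀ u v : V, G.Adj (φ u) (φ v) ↔
      (u ≠ v ∧ ¬ G.Adj u v ∧ ∀ w, ¬ (G.Adj u w ∧ G.Adj w v)) := by
    intro u v
    constructor
    · intro hadj
      have hne : u ≠ v := by
        intro e; subst e; exact hadj.ne rfl
      have hnsq : ¬ G.square.Adj u v := by
        intro hsq
        have hcadj : Gᶜ.Adj (φ u) (φ v) := φ.map_adj_iff.mpr hsq
        exact ((compl_adj G _ _).mp hcadj).2 hadj
      refine ⟨hne, ?_, ?_⟩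
      · exact fun hh => hnsq ⟨hne, Or.inl hh⟩
      · exact fun w hw => hnsq ⟨hne, Or.inr ⟨w, hw⟩⟩
    · rintro ⟨hne, hnadj, hnc⟩
      have hnsq : ¬ G.square.Adj u v := by
        rintro ⟨-, hh | ⟨w, hw⟩⟩
        · exact hnadj hh
        · exact hnc w hw
      have hnc' : ¬ Gᶜ.Adj (φ u) (φ v) := fun hcadj => hnsq (φ.map_adj_iff.mp hcadj)
      by_contra hno
      exact hnc' ((compl_adj G _ _).mpr ⟨fun e => hne (φ.injective e), hno⟩)
  -- transfer bipartition sides along far pairs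
  have far_flip : ∀ {u v : V}, G.Adj (φ u) (φ v) → ((φ u ∈ A) ↔ ¬ (φ v ∈ A)) := by
    intro u v hadj
    rcases hedge hadj with ⟨h1, h2⟩ | ⟨h1, h2⟩
    · exact iff_of_true h1 (fun hh => (hAB _).mp hh h2)
    · exact iff_of_false (fun hh => (hAB _).mp hh h1) (not_not_intro h2)
  -- no "far triangle"
  have L2 : ∀ {a b c : V}, G.Adj (φ a) (φ b) → G.Adj (φ b) (φ c) →
      G.Adj (φ a) (φ c) → False := by
    intro a b c h1 h2 h3
    have f1 := far_flip h1
    have f2 := far_flip h2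
    have f3 := far_flip h3
    tauto
  -- no isolated vertices
  have L1 : ∀ v : V, ∃ w, G.Adj v w := by
    intro v
    by_contra hno
    push_neg at hno
    have hfar : ∀ u, u ≠ v → G.Adj (φ v) (φ u) := by
      intro u hu
      exact (far_iff v u).mpr ⟨hu.symm, hno u, fun w hw => hno w hw.1⟩
    by_cases hφv : φ v = v
    · rcases eq_or_ne v x with rfl | hvx
      · have hh := hfar y (Ne.symm hxy)
        rw [hφv] at hh
        exact hno (φ y) hh
      · have hh := hfar x (Ne.symm hvx)
        rw [hφv] at hh
        exact hno (φ x) hh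
    · have hne : φ.symm v ≠ v := by
        intro e
        have : φ (φ.symm v) = v := φ.apply_symm_apply v
        rw [e] at this
        exact hφv this
      have hh := hfar _ hne
      rw [φ.apply_symm_apply] at hh
      exact hno (φ v) hh.symm
  -- far pairs across A/B
  have far_of_cross : ∀ {a b : V}, a ∈ A → b ∈ B → ¬ G.Adj a b → G.Adj (φ a) (φ b) := by
    intro a b ha hb hnadj
    refine (far_iff a b).mpr ⟨fun e => (hAB a).mp ha (e ▸ hb), hnadj, ?_⟩
    rintro w ⟨h1, h2⟩
    have hwB : w ∈ B := memB ha h1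
    rcases hedge h2 with ⟨hwA, _⟩ | ⟨_, hbA⟩
    · exact (hAB w).mp hwA hwB
    · exact (hAB b).mp hbA hb
  -- x and y form a far pair
  have hfxy : G.Adj (φ x) (φ y) :=
    (far_iff x y).mpr ⟨hxy, noadjAA hx hy, fun w hw => hc w ⟨hw.1, hw.2.symm⟩⟩
  -- every vertex of B is adjacent to x or y
  have cover : ∀ {b : V}, b ∈ B → G.Adj x b ∨ G.Adj y b := by
    intro b hb
    by_contra hno
    push_neg at hno
    exact L2 hfxy (far_of_cross hy hb hno.2) (far_of_cross hx hb hno.1)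
  -- vertices on x's side of the (far-)bipartition are adjacent to all of N(x)
  have hadjB1 : ∀ {a : V}, a ∈ A → ((φ a ∈ A) ↔ (φ x ∈ A)) →
      ∀ {b : V}, G.Adj x b → G.Adj a b := by
    intro a ha hiff b hxb
    by_contra hnadj
    have hbB : b ∈ B := memB hx hxb
    have f1 := far_flip (far_of_cross ha hbB hnadj)
    have hnyb : ¬ G.Adj y b := fun hyb => hc b ⟨hxb, hyb⟩
    have f2 := far_flip (far_of_cross hy hbB hnyb)
    have f3 := far_flip hfxy
    tauto
  have hadjB2 : ∀ {a : V}, a ∈ A → ((φ a ∈ A) ↔ ¬ (φ x ∈ A)) →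
      ∀ {b : V}, G.Adj y b → G.Adj a b := by
    intro a ha hiff b hyb
    by_contra hnadj
    have hbB : b ∈ B := memB hy hyb
    have f1 := far_flip (far_of_cross ha hbB hnadj)
    have hnxb : ¬ G.Adj x b := fun hxb => hc b ⟨hxb, hyb⟩
    have f2 := far_flip (far_of_cross hx hbB hnxb)
    tauto
  -- contradiction producers
  have ContraA : ∀ z : V, (∀ a ∈ A, G.Adj z a) → False := by
    intro z hz
    exact hc z ⟨(hz x hx).symm, (hz y hy).symm⟩
  have ContraB : ∀ z : V, (∀ b ∈ B, G.Adj z b) → False := by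
    intro z hz
    by_cases hzB : z ∈ B
    · exact (hz z hzB).ne rfl
    · obtain ⟨w, hw⟩ := L1 (φ z)
      have hfz : G.Adj (φ z) (φ (φ.symm w)) := by rwa [φ.apply_symm_apply]
      obtain ⟨hne, hnadj, hnc⟩ := (far_iff z (φ.symm w)).mp hfz
      by_cases huB : φ.symm w ∈ B
      · exact hnadj (hz _ huB)
      · have huA : φ.symm w ∈ A := (hAB _).mpr huB
        obtain ⟨b₀, hb₀⟩ := L1 (φ.symm w)
        have hb₀B : b₀ ∈ B := memB huA hb₀
        exact hnc b₀ ⟨hz b₀ hb₀B, hb₀.symm⟩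
  -- "second-level far": triangle-freeness one level up
  have B2 : ∀ {u v : V}, u ≠ v → ¬ G.Adj (φ u) (φ v) →
      (∀ t, ¬ (G.Adj (φ u) (φ t) ∧ G.Adj (φ t) (φ v))) →
      G.Adj (φ (φ u)) (φ (φ v)) := by
    intro u v hne hnadj hnc
    refine (far_iff (φ u) (φ v)).mpr ⟨fun e => hne (φ.injective e), hnadj, ?_⟩
    rintro w ⟨hw1, hw2⟩
    refine hnc (φ.symm w) ?_
    rw [φ.apply_symm_apply]
    exact ⟨hw1, hw2⟩
  have L2' : ∀ {p q r : V},
      p ≠ q → ¬ G.Adj (φ p) (φ q) → (∀ t, ¬ (G.Adj (φ p) (φ t) ∧ G.Adj (φ t) (φ q))) →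
      q ≠ r → ¬ G.Adj (φ q) (φ r) → (∀ t, ¬ (G.Adj (φ q) (φ t) ∧ G.Adj (φ t) (φ r))) →
      p ≠ r → ¬ G.Adj (φ p) (φ r) → (∀ t, ¬ (G.Adj (φ p) (φ t) ∧ G.Adj (φ t) (φ r))) →
      False := by
    intro p q r h1 h2 h3 h4 h5 h6 h7 h8 h9
    exact L2 (B2 h1 h2 h3) (B2 h4 h5 h6) (B2 h7 h8 h9)
  -- main case analysis
  by_cases hP1 : ∀ a ∈ A, ((φ a ∈ A) ↔ (φ x ∈ A)) → ∀ w, G.Adj a w → G.Adj x w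
  · -- all vertices on x's side have neighborhood inside N(x):
    -- then y is far from everything on x's side
    have hyfar : ∀ v, ((φ v ∈ A) ↔ (φ x ∈ A)) → G.Adj (φ y) (φ v) := by
      intro v hv
      by_cases hvB : v ∈ B
      · have hnyv : ¬ G.Adj y v := by
          intro hyv
          have hnxv : ¬ G.Adj x v := fun hxv => hc v ⟨hxv, hyv⟩
          have f1 := far_flip (far_of_cross hx hvB hnxv)
          tauto
        exact far_of_cross hy hvB hnyv
      · have hvA : v ∈ A := (hAB v).mpr hvB
        have f3 := far_flip hfxy
        refine (far_iff y v).mpr ⟨?_, noadjAA hy hvA, ?_⟩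
        · intro e
          rw [← e] at hv
          tauto
        · rintro w ⟨h1, h2⟩
          exact hc w ⟨hP1 v hvA hv w h2.symm, h1⟩
    by_cases hPx : φ x ∈ A
    · refine ContraA (φ y) (fun a ha => ?_)
      have hv : (φ (φ.symm a) ∈ A) ↔ (φ x ∈ A) := by
        rw [φ.apply_symm_apply]; exact iff_of_true ha hPx
      have hh := hyfar (φ.symm a) hv
      rwa [φ.apply_symm_apply] at hh
    · refine ContraB (φ y) (fun b hb => ?_)
      have hbA : ¬ (b ∈ A) := fun hbA => (hAB b).mp hbA hb
      have hv : (φ (φ.symm b) ∈ A) ↔ (φ x ∈ A) := by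
        rw [φ.apply_symm_apply]; exact iff_of_false hbA hPx
      have hh := hyfar (φ.symm b) hv
      rwa [φ.apply_symm_apply] at hh
  · by_cases hP2 : ∀ a ∈ A, ((φ a ∈ A) ↔ ¬ (φ x ∈ A)) → ∀ w, G.Adj a w → G.Adj y w
    · -- symmetric: x is far from everything on y's side
      have hxfar : ∀ v, ((φ v ∈ A) ↔ ¬ (φ x ∈ A)) → G.Adj (φ x) (φ v) := by
        intro v hv
        by_cases hvB : v ∈ B
        · have hnxv : ¬ G.Adj x v := by
            intro hxv
            have hnyv : ¬ G.Adj y v := fun hyv => hc v ⟨hxv, hyv⟩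
            have f1 := far_flip (far_of_cross hy hvB hnyv)
            have f3 := far_flip hfxy
            tauto
          exact far_of_cross hx hvB hnxv
        · have hvA : v ∈ A := (hAB v).mpr hvB
          refine (far_iff x v).mpr ⟨?_, noadjAA hx hvA, ?_⟩
          · intro e
            rw [← e] at hv
            tauto
          · rintro w ⟨h1, h2⟩
            exact hc w ⟨h1, hP2 v hvA hv w h2.symm⟩
      by_cases hPx : φ x ∈ A
      · refine ContraB (φ x) (fun b hb => ?_)
        have hbA : ¬ (b ∈ A) := fun hbA => (hAB b).mp hbA hb
        have hv : (φ (φ.symm b) ∈ A) ↔ ¬ (φ x ∈ A) := by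
          rw [φ.apply_symm_apply]; exact iff_of_false hbA (not_not_intro hPx)
        have hh := hxfar (φ.symm b) hv
        rwa [φ.apply_symm_apply] at hh
      · refine ContraA (φ x) (fun a ha => ?_)
        have hv : (φ (φ.symm a) ∈ A) ↔ ¬ (φ x ∈ A) := by
          rw [φ.apply_symm_apply]; exact iff_of_true ha hPx
        have hh := hxfar (φ.symm a) hv
        rwa [φ.apply_symm_apply] at hh
    · -- both sides contain an "impure" vertex: build a far-far triangle
      push_neg at hP1 hP2
      obtain ⟨a₁, ha₁A, hpr1, c₂, hac₂, hnxc₂⟩ := hP1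
      obtain ⟨a₂, ha₂A, hpr2, c₁, hac₁, hnyc₁⟩ := hP2
      have hc₂B : c₂ ∈ B := memB ha₁A hac₂
      have hyc₂ : G.Adj y c₂ := (cover hc₂B).resolve_left hnxc₂
      have hc₁B : c₁ ∈ B := memB ha₂A hac₁
      have hxc₁ : G.Adj x c₁ := (cover hc₁B).resolve_right hnyc₁
      have N₁ : ∀ {b : V}, G.Adj x b → G.Adj a₁ b := fun hb => hadjB1 ha₁A hpr1 hb
      have N₂ : ∀ {b : V}, G.Adj y b → G.Adj a₂ b := fun hb => hadjB2 ha₂A hpr2 hb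
      -- a₁ is far from no vertex of A
      have noFar₁ : ∀ t, t ∈ A → ¬ G.Adj (φ a₁) (φ t) := by
        intro t htA hft
        have hflip := far_flip hft
        have htx : (φ t ∈ A) ↔ ¬ (φ x ∈ A) := by tauto
        have hta : G.Adj t c₂ := hadjB2 htA htx hyc₂
        exact ((far_iff a₁ t).mp hft).2.2 c₂ ⟨hac₂, hta.symm⟩
      -- pair (a₁, c₁)
      have ne₁ : a₁ ≠ c₁ := fun e => (hAB a₁).mp ha₁A (e ▸ hc₁B)
      have nf₁ : ¬ G.Adj (φ a₁) (φ c₁) := fun hf =>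
        ((far_iff a₁ c₁).mp hf).2.1 (N₁ hxc₁)
      have nc₁ : ∀ t, ¬ (G.Adj (φ a₁) (φ t) ∧ G.Adj (φ t) (φ c₁)) := by
        rintro t ⟨hf1, hf2⟩
        by_cases htB : t ∈ B
        · have hnat : ¬ G.Adj a₁ t := ((far_iff a₁ t).mp hf1).2.1
          have hnxt : ¬ G.Adj x t := fun hxt => hnat (N₁ hxt)
          have hyt : G.Adj y t := (cover htB).resolve_left hnxt
          have ha₂t : G.Adj a₂ t := N₂ hyt
          exact ((far_iff t c₁).mp hf2).2.2 a₂ ⟨ha₂t.symm, hac₁⟩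
        · exact noFar₁ t ((hAB t).mpr htB) hf1
      -- pair (c₁, a₂)
      have ne₂ : c₁ ≠ a₂ := fun e => (hAB a₂).mp ha₂A (e ▸ hc₁B)
      have nf₂ : ¬ G.Adj (φ c₁) (φ a₂) := fun hf =>
        ((far_iff c₁ a₂).mp hf).2.1 hac₁.symm
      have nc₂ : ∀ t, ¬ (G.Adj (φ c₁) (φ t) ∧ G.Adj (φ t) (φ a₂)) := by
        rintro t ⟨hf1, hf2⟩
        by_cases htB : t ∈ B
        · have hnta : ¬ G.Adj t a₂ := ((far_iff t a₂).mp hf2).2.1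
          have hnyt : ¬ G.Adj y t := fun hyt => hnta (N₂ hyt).symm
          have hxt : G.Adj x t := (cover htB).resolve_right hnyt
          exact ((far_iff c₁ t).mp hf1).2.2 x ⟨hxc₁.symm, hxt⟩
        · have htA : t ∈ A := (hAB t).mpr htB
          have hflip := far_flip hf2
          have htx : (φ t ∈ A) ↔ (φ x ∈ A) := by tauto
          have hh : G.Adj t c₁ := hadjB1 htA htx hxc₁
          exact ((far_iff c₁ t).mp hf1).2.1 hh.symm
      -- pair (a₁, a₂)
      have ne₃ : a₁ ≠ a₂ := by
        intro e
        rw [e] at hpr1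
        tauto
      have nf₃ : ¬ G.Adj (φ a₁) (φ a₂) := noFar₁ a₂ ha₂A
      have nc₃ : ∀ t, ¬ (G.Adj (φ a₁) (φ t) ∧ G.Adj (φ t) (φ a₂)) := by
        rintro t ⟨hf1, hf2⟩
        by_cases htB : t ∈ B
        · have hnat : ¬ G.Adj a₁ t := ((far_iff a₁ t).mp hf1).2.1
          have hnxt : ¬ G.Adj x t := fun hxt => hnat (N₁ hxt)
          have hyt : G.Adj y t := (cover htB).resolve_left hnxt
          exact ((far_iff t a₂).mp hf2).2.1 (N₂ hyt).symm
        · exact noFar₁ t ((hAB t).mpr htB) hf1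
      exact L2' ne₁ nf₁ nc₁ ne₂ nf₂ nc₂ ne₃ nf₃ nc₃
end

section
/- For every positive integer k, there exists a square-complementary graph containing an induced path on k vertices. -/
open SimpleGraph

namespace SqucoConstruction

/-- Row vertices: a tag in `Fin 2` and a pair of column indices. -/
abbrev Row (m : ℕ) := Fin 2 × Fin m × Fin m
/-- Column vertices: a tag in `Fin 2` and a column index. -/
abbrev Col (m : ℕ) := Fin 2 × Fin m
/-- The vertex set. -/
abbrev V (m : ℕ) := Row m ⊕ Col m

/-- The bipartite adjacency between rows and columns. -/
def E (m : ℕ) (r : Row m) (c : Col m) : Prop :=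
  (r.1 = 0 ∧ c.1 = 0) ∨
  (r.1 = 0 ∧ c.1 = 1 ∧ (c.2 = r.2.1 ∨ c.2 = r.2.2)) ∨
  (r.1 = 1 ∧ c.1 = 0 ∧ ¬(c.2 = r.2.1 ∨ c.2 = r.2.2))

/-- The graph. -/
def G (m : ℕ) : SimpleGraph (V m) where
  Adj u v :=
    match u, v with
    | .inl r, .inr c => E m r c
    | .inr c, .inl r => E m r c
    | _, _ => False
  symm := by constructor; rintro (r | c) (r' | c') h <;> exact h
  loopless := by constructor; rintro (r | c) h <;> exact h

lemma adj_inl_inr {m : ℕ} (r : Row m) (c : Col m) :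
    (G m).Adj (.inl r) (.inr c) ↔ E m r c := Iff.rfl

lemma adj_inr_inl {m : ℕ} (c : Col m) (r : Row m) :
    (G m).Adj (.inr c) (.inl r) ↔ E m r c := Iff.rfl

lemma not_adj_inl_inl {m : ℕ} (r r' : Row m) :
    ¬ (G m).Adj (.inl r) (.inl r') := fun h => h

lemma not_adj_inr_inr {m : ℕ} (c c' : Col m) :
    ¬ (G m).Adj (.inr c) (.inr c') := fun h => h

lemma square_adj {W : Type*} (G : SimpleGraph W) (u v : W) :
    G.square.Adj u v ↔ u ≠ v ∧ (G.Adj u v ∨ ∃ w, G.Adj u w ∧ G.Adj w v) := Iff.rfl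

lemma fin2_cases (x : Fin 2) : x = 0 ∨ x = 1 := by
  fin_cases x
  · exact Or.inl rfl
  · exact Or.inr rfl

lemma fin2_add_one_add_one (x : Fin 2) : x + 1 + 1 = x := by
  fin_cases x <;> rfl

/-- The flipping map. -/
def flip (m : ℕ) : V m → V m
  | .inl (s, a, b) => .inl (s + 1, a, b)
  | .inr (t, j) => .inr (t + 1, j)

lemma flip_involutive (m : ℕ) : Function.Involutive (flip m) := by
  rintro (⟨s, a, b⟩ | ⟨t, j⟩) <;> simp [flip, fin2_add_one_add_one]

/-- The flipping permutation. -/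
def σ (m : ℕ) : Equiv.Perm (V m) := (flip_involutive m).toPerm

lemma σ_inl (m : ℕ) (s : Fin 2) (a b : Fin m) :
    σ m (.inl (s, a, b)) = .inl (s + 1, a, b) := rfl

lemma σ_inr (m : ℕ) (t : Fin 2) (j : Fin m) :
    σ m (.inr (t, j)) = .inr (t + 1, j) := rfl

/-- In `Fin m` with `m ≥ 5`, we can avoid any four given elements. -/
lemma exists_avoid {m : ℕ} (hm : 5 ≤ m) (a b c d : Fin m) :
    ∃ j : Fin m, j ≠ a ∧ j ≠ b ∧ j ≠ c ∧ j ≠ d := by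
  have hcard : ({a, b, c, d} : Finset (Fin m)).card ≤ 4 := by
    refine le_trans (Finset.card_insert_le _ _) ?_
    refine Nat.succ_le_succ ?_
    refine le_trans (Finset.card_insert_le _ _) ?_
    refine Nat.succ_le_succ ?_
    refine le_trans (Finset.card_insert_le _ _) ?_
    simp
  obtain ⟨j, hj⟩ : ∃ j : Fin m, j ∉ ({a, b, c, d} : Finset (Fin m)) := by
    by_contra h
    push_neg at h
    have hsub : (Finset.univ : Finset (Fin m)) ⊆ ({a, b, c, d} : Finset (Fin m)) :=
      fun x _ => h x
    have := Finset.card_le_card hsub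
    rw [Finset.card_univ, Fintype.card_fin] at this
    omega
  simp only [Finset.mem_insert, Finset.mem_singleton, not_or] at hj
  exact ⟨j, hj.1, hj.2.1, hj.2.2.1, hj.2.2.2⟩

lemma E_flip {m : ℕ} (s t : Fin 2) (a b j : Fin m) :
    ¬ E m (s + 1, a, b) (t + 1, j) ↔ E m (s, a, b) (t, j) := by
  rcases fin2_cases s with hs | hs <;> rcases fin2_cases t with ht | ht <;>
    subst hs <;> subst ht <;> simp [E] <;> tauto

/-- The square of `G m` is isomorphic to its complement. -/
def theIso (m : ℕ) (hm : 5 ≤ m) : (G m).square ≃g (G m)ᶜ := by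
  refine ⟨σ m, ?_⟩
  rintro (⟨s, a, b⟩ | ⟨t, j⟩) (⟨s', c, d⟩ | ⟨t', j'⟩)
  · -- both rows
    rw [compl_adj, (σ m).injective.ne_iff, σ_inl, σ_inl, square_adj]
    constructor
    · rintro ⟨hne, -⟩
      refine ⟨hne, Or.inr ?_⟩
      obtain ⟨jj, h1, h2, h3, h4⟩ := exists_avoid hm a b c d
      refine ⟨.inr (0, jj), ?_, ?_⟩
      · rw [adj_inl_inr]
        rcases fin2_cases s with hs | hs <;> subst hs <;> simp [E, h1, h2]
      · rw [adj_inr_inl]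
        rcases fin2_cases s' with hs | hs <;> subst hs <;> simp [E, h3, h4]
    · rintro ⟨hne, -⟩
      exact ⟨hne, not_adj_inl_inl _ _⟩
  · -- row, column
    rw [σ_inl, σ_inr, compl_adj]
    have hne1 : (Sum.inl (s + 1, a, b) : V m) ≠ .inr (t' + 1, j') := by simp
    have hne2 : (Sum.inl (s, a, b) : V m) ≠ .inr (t', j') := by simp
    have hnocommon : ¬ ∃ w, (G m).Adj (.inl (s, a, b)) w ∧ (G m).Adj w (.inr (t', j')) := by
      rintro ⟨(r'' | c''), h1, h2⟩
      · exact not_adj_inl_inl _ _ h1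
      · exact not_adj_inr_inr _ _ h2
    constructor
    · rintro ⟨-, hnadj⟩
      rw [adj_inl_inr] at hnadj
      rw [E_flip] at hnadj
      exact ⟨hne2, Or.inl hnadj⟩
    · rintro ⟨-, hadj | hcom⟩
      · rw [adj_inl_inr] at hadj
        exact ⟨hne1, by rw [adj_inl_inr, E_flip]; exact hadj⟩
      · exact absurd hcom hnocommon
  · -- column, row
    rw [σ_inr, σ_inl, compl_adj]
    have hne1 : (Sum.inr (t + 1, j) : V m) ≠ .inl (s' + 1, c, d) := by simp
    have hne2 : (Sum.inr (t, j) : V m) ≠ .inl (s', c, d) := by simp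
    have hnocommon : ¬ ∃ w, (G m).Adj (.inr (t, j)) w ∧ (G m).Adj w (.inl (s', c, d)) := by
      rintro ⟨(r'' | c''), h1, h2⟩
      · exact not_adj_inl_inl _ _ h2
      · exact not_adj_inr_inr _ _ h1
    constructor
    · rintro ⟨-, hnadj⟩
      rw [adj_inr_inl] at hnadj
      rw [E_flip] at hnadj
      exact ⟨hne2, Or.inl hnadj⟩
    · rintro ⟨-, hadj | hcom⟩
      · rw [adj_inr_inl] at hadj
        exact ⟨hne1, by rw [adj_inr_inl, E_flip]; exact hadj⟩
      · exact absurd hcom hnocommon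
  · -- both columns
    rw [compl_adj, (σ m).injective.ne_iff, σ_inr, σ_inr, square_adj]
    constructor
    · rintro ⟨hne, -⟩
      refine ⟨hne, Or.inr ⟨.inl (0, j, j'), ?_, ?_⟩⟩
      · rw [adj_inr_inl]
        rcases fin2_cases t with ht | ht <;> subst ht <;> simp [E]
      · rw [adj_inl_inr]
        rcases fin2_cases t' with ht | ht <;> subst ht <;> simp [E]
    · rintro ⟨hne, -⟩
      exact ⟨hne, not_adj_inr_inr _ _⟩

end SqucoConstruction

set_option maxHeartbeats 1000000 in
/-- For every positive `k` there is a square-complementary graph containing an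
induced path on `k` vertices. -/
theorem exists_squco_with_induced_path (k : ℕ) (hk : 0 < k) :
    ∃ (V : Type) (_ : Fintype V) (G : SimpleGraph V) (f : Fin k ↪ V),
      G.IsSquco ∧ ∀ i j : Fin k, G.Adj (f i) (f j) ↔ (pathGraph k).Adj i j := by
  classical
  set m : ℕ := k + 5 with hm
  have hm5 : 5 ≤ m := by omega
  refine ⟨SqucoConstruction.V m, inferInstance, SqucoConstruction.G m, ?_, ?_, ?_⟩
  · -- the embedding
    refine ⟨fun i => if i.val % 2 = 0
        then .inr (1, ⟨i.val / 2, by omega⟩)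
        else .inl (0, ⟨i.val / 2, by omega⟩, ⟨i.val / 2 + 1, by omega⟩), ?_⟩
    intro i j hij
    by_cases hi : i.val % 2 = 0 <;> by_cases hj : j.val % 2 = 0 <;>
      simp only [hi, hj, if_pos, if_neg, if_true, if_false] at hij
    · simp only [Sum.inr.injEq, Prod.mk.injEq, Fin.mk.injEq] at hij
      exact Fin.ext (by omega)
    · exact absurd hij (by simp)
    · exact absurd hij (by simp)
    · simp only [Sum.inl.injEq, Prod.mk.injEq, Fin.mk.injEq] at hij
      exact Fin.ext (by omega)
  · exact ⟨SqucoConstruction.theIso m hm5⟩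
  · intro i j
    rw [pathGraph_adj]
    change (SqucoConstruction.G m).Adj
      (if i.val % 2 = 0 then (Sum.inr (1, ⟨i.val / 2, by omega⟩) : SqucoConstruction.V m)
        else .inl (0, ⟨i.val / 2, by omega⟩, ⟨i.val / 2 + 1, by omega⟩))
      (if j.val % 2 = 0 then (Sum.inr (1, ⟨j.val / 2, by omega⟩) : SqucoConstruction.V m)
        else .inl (0, ⟨j.val / 2, by omega⟩, ⟨j.val / 2 + 1, by omega⟩)) ↔ _
    by_cases hi : i.val % 2 = 0 <;> by_cases hj : j.val % 2 = 0 <;>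
      simp only [hi, hj, if_pos, if_neg, if_true, if_false]
    · rw [iff_iff_implies_and_implies]
      constructor
      · intro h
        exact absurd h (SqucoConstruction.not_adj_inr_inr _ _)
      · intro h
        exact absurd h (by omega)
    · rw [SqucoConstruction.adj_inr_inl, SqucoConstruction.E]
      constructor
      · rintro (⟨h1, h2⟩ | ⟨h1, h2, h3⟩ | ⟨h1, h2, h3⟩)
        · exact absurd h2 (by simp)
        · simp only [Fin.mk.injEq] at h3
          omega
        · exact absurd h1 (by simp)
      · intro h
        refine Or.inr (Or.inl ⟨rfl, rfl, ?_⟩)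
        simp only [Fin.mk.injEq]
        omega
    · rw [SqucoConstruction.adj_inl_inr, SqucoConstruction.E]
      constructor
      · rintro (⟨h1, h2⟩ | ⟨h1, h2, h3⟩ | ⟨h1, h2, h3⟩)
        · exact absurd h2 (by simp)
        · simp only [Fin.mk.injEq] at h3
          omega
        · exact absurd h1 (by simp)
      · intro h
        refine Or.inr (Or.inl ⟨rfl, rfl, ?_⟩)
        simp only [Fin.mk.injEq]
        omega
    · rw [iff_iff_implies_and_implies]
      constructor
      · intro h
        exact absurd h (SqucoConstruction.not_adj_inl_inl _ _)
      · intro h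
        exact absurd h (by omega)
end

section
/- There is no cubic (3-regular) bipartite planar square-complementary graph on 12 vertices. -/
open SimpleGraph

/-- An embedding of a subdivision of `H` into `G`: branch vertices are mapped
injectively into `G`, each edge of `H` corresponds to a path in `G` between the
images of its endpoints, these paths contain no branch vertices in their
interior, and paths corresponding to distinct edges are internally disjoint. -/
structure SimpleGraph.SubdivEmbedding {U W : Type*} (H : SimpleGraph U) (G : SimpleGraph W) where
  vmap : U ↪ W
  walk : ∀ ⦃u v : U⦄, H.Adj u v → G.Walk (vmap u) (vmap v)
  walk_isPath : ∀ ⦃u v : U⦄ (h : H.Adj u v), (walk h).IsPath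
  branch_mem_support : ∀ ⦃u v : U⦄ (h : H.Adj u v) (w : U),
    vmap w ∈ (walk h).support → w = u ∨ w = v
  internally_disjoint : ∀ ⦃u v u' v' : U⦄ (h : H.Adj u v) (h' : H.Adj u' v'),
    ({u, v} : Set U) ≠ {u', v'} →
    ∀ x, x ∈ (walk h).support → x ∈ (walk h').support →
      ∃ w, x = vmap w ∧ w ∈ ({u, v} : Set U) ∩ {u', v'}

/-- `G` contains a subdivision of `H`. -/
def SimpleGraph.ContainsSubdivisionOf {U W : Type*} (G : SimpleGraph W) (H : SimpleGraph U) :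
    Prop :=
  Nonempty (H.SubdivEmbedding G)

/-- Planarity, via Kuratowski's characterization: a graph is planar iff it
contains no subdivision of `K₅` and no subdivision of `K₃,₃`. -/
def SimpleGraph.IsPlanar {W : Type*} (G : SimpleGraph W) : Prop :=
  ¬ G.ContainsSubdivisionOf (completeGraph (Fin 5)) ∧
  ¬ G.ContainsSubdivisionOf (completeBipartiteGraph (Fin 3) (Fin 3))


open Finset

abbrev FrK33 : SimpleGraph (Fin 3 ⊕ Fin 3) := completeBipartiteGraph (Fin 3) (Fin 3)

instance : DecidableRel FrK33.Adj := fun _ _ => inferInstanceAs (Decidable (_ ∧ _ ∨ _ ∧ _))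

/-- Transfer a subdivision embedding along an injective graph hom. -/
def SimpleGraph.SubdivEmbedding.comp {U W W' : Type*} {H : SimpleGraph U} {F : SimpleGraph W}
    {G : SimpleGraph W'} (f : F →g G) (hf : Function.Injective f)
    (E : H.SubdivEmbedding F) : H.SubdivEmbedding G where
  vmap := ⟨f ∘ E.vmap, hf.comp E.vmap.injective⟩
  walk := fun u v h => (E.walk h).map f
  walk_isPath := fun u v h => SimpleGraph.Walk.map_isPath_of_injective hf (E.walk_isPath h)
  branch_mem_support := by
    intro u v h w hw
    rw [Walk.support_map, List.mem_map] at hw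
    obtain ⟨s, hs, hfs⟩ := hw
    exact E.branch_mem_support h w (hf hfs ▸ hs)
  internally_disjoint := by
    intro u v u' v' h h' hne x hx hx'
    rw [Walk.support_map, List.mem_map] at hx hx'
    obtain ⟨s, hs, hxeq⟩ := hx
    obtain ⟨s', hs', hxeq'⟩ := hx'
    have hss : s' = s := hf (by rw [hxeq, hxeq'])
    subst hss
    obtain ⟨w, hw1, hw2⟩ := E.internally_disjoint h h' hne s' hs hs'
    exact ⟨w, by rw [← hxeq, hw1]; rfl, hw2⟩

def Fredges : List (ℕ × ℕ) :=
  [(0,1),(0,3),(0,4),(4,5),(1,2),(2,3),(2,6),(5,6),(7,8),(1,7),(8,9),(3,9),(5,8)]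

def Fr10 : SimpleGraph (Fin 10) where
  Adj x y := (x.val, y.val) ∈ Fredges ∨ (y.val, x.val) ∈ Fredges
  symm := by constructor; intro x y h; tauto
  loopless := by constructor; intro x; fin_cases x <;> decide

instance : DecidableRel Fr10.Adj := fun _ _ => inferInstanceAs (Decidable (_ ∨ _))

def Frvl : Fin 3 → Fin 10 := ![0, 2, 8]
def Frvr : Fin 3 → Fin 10 := ![1, 3, 5]
def Frvmap : Fin 3 ⊕ Fin 3 → Fin 10 := Sum.elim Frvl Frvr

open SimpleGraph.Walk in
def Frwd : ∀ i j : Fin 3, Fr10.Walk (Frvl i) (Frvr j)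
  | ⟨0,_⟩, ⟨0,_⟩ => cons (show Fr10.Adj 0 1 by decide) nil
  | ⟨0,_⟩, ⟨1,_⟩ => cons (show Fr10.Adj 0 3 by decide) nil
  | ⟨0,_⟩, ⟨2,_⟩ => cons (show Fr10.Adj 0 4 by decide) (cons (show Fr10.Adj 4 5 by decide) nil)
  | ⟨1,_⟩, ⟨0,_⟩ => cons (show Fr10.Adj 2 1 by decide) nil
  | ⟨1,_⟩, ⟨1,_⟩ => cons (show Fr10.Adj 2 3 by decide) nil
  | ⟨1,_⟩, ⟨2,_⟩ => cons (show Fr10.Adj 2 6 by decide) (cons (show Fr10.Adj 6 5 by decide) nil)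
  | ⟨2,_⟩, ⟨0,_⟩ => cons (show Fr10.Adj 8 7 by decide) (cons (show Fr10.Adj 7 1 by decide) nil)
  | ⟨2,_⟩, ⟨1,_⟩ => cons (show Fr10.Adj 8 9 by decide) (cons (show Fr10.Adj 9 3 by decide) nil)
  | ⟨2,_⟩, ⟨2,_⟩ => cons (show Fr10.Adj 8 5 by decide) nil
  | ⟨_+3,h⟩, _ => absurd h (by omega)
  | _, ⟨_+3,h⟩ => absurd h (by omega)

def Frwalk : ∀ ⦃u v : Fin 3 ⊕ Fin 3⦄, FrK33.Adj u v → Fr10.Walk (Frvmap u) (Frvmap v) :=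
  fun u v h =>
  match u, v with
  | .inl i, .inr j => Frwd i j
  | .inr j, .inl i => (Frwd i j).reverse
  | .inl _, .inl _ => absurd h (by simp [FrK33])
  | .inr _, .inr _ => absurd h (by simp [FrK33])

lemma Frnodup : ∀ (u v : Fin 3 ⊕ Fin 3) (h : FrK33.Adj u v), (Frwalk h).support.Nodup := by
  decide

lemma Frbranch : ∀ (u v : Fin 3 ⊕ Fin 3) (h : FrK33.Adj u v) (w : Fin 3 ⊕ Fin 3),
    Frvmap w ∈ (Frwalk h).support → w = u ∨ w = v := by decide

set_option synthInstance.maxSize 512 in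
set_option synthInstance.maxHeartbeats 1000000 in
set_option maxHeartbeats 4000000 in
lemma Frdisj : ∀ (u v u' v' : Fin 3 ⊕ Fin 3) (h : FrK33.Adj u v) (h' : FrK33.Adj u' v'),
    ¬(u = u' ∧ v = v') → ¬(u = v' ∧ v = u') →
    ∀ x, x ∈ (Frwalk h).support → x ∈ (Frwalk h').support →
      ∃ w, x = Frvmap w ∧ (w = u ∨ w = v) ∧ (w = u' ∨ w = v') := by decide

def Frsub : FrK33.SubdivEmbedding Fr10 where
  vmap := ⟨Frvmap, by decide⟩
  walk := Frwalk
  walk_isPath := fun u v h => Walk.IsPath.mk' (Frnodup u v h)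
  branch_mem_support := fun u v => Frbranch u v
  internally_disjoint := by
    intro u v u' v' h h' hne x hx hx'
    have h1 : ¬(u = u' ∧ v = v') := by rintro ⟨rfl, rfl⟩; exact hne rfl
    have h2 : ¬(u = v' ∧ v = u') := by rintro ⟨rfl, rfl⟩; exact hne (Set.pair_comm _ _)
    obtain ⟨w, hw1, hw2, hw3⟩ := Frdisj u v u' v' h h' h1 h2 x hx hx'
    refine ⟨w, hw1, ?_⟩
    constructor <;> [rcases hw2 with rfl|rfl; rcases hw3 with rfl|rfl] <;> simp

set_option maxHeartbeats 1000000 in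
lemma franklin_contains_k33 {V : Type*} (G : SimpleGraph V)
    (a0 a1 a2 a3 b0 b1 b2 c0 c1 c2 : V)
    (ne1 : a0 ≠ a1) (ne2 : a0 ≠ a2) (ne3 : a0 ≠ a3) (ne4 : a0 ≠ b0) (ne5 : a0 ≠ b1) (ne6 : a0 ≠ b2) (ne7 : a0 ≠ c0) (ne8 : a0 ≠ c1) (ne9 : a0 ≠ c2) (ne10 : a1 ≠ a2) (ne11 : a1 ≠ a3) (ne12 : a1 ≠ b0) (ne13 : a1 ≠ b1) (ne14 : a1 ≠ b2) (ne15 : a1 ≠ c0) (ne16 : a1 ≠ c1) (ne17 : a1 ≠ c2) (ne18 : a2 ≠ a3) (ne19 : a2 ≠ b0) (ne20 : a2 ≠ b1) (ne21 : a2 ≠ b2) (ne22 : a2 ≠ c0) (ne23 : a2 ≠ c1) (ne24 : a2 ≠ c2) (ne25 : a3 ≠ b0) (ne26 : a3 ≠ b1) (ne27 : a3 ≠ b2) (ne28 : a3 ≠ c0) (ne29 : a3 ≠ c1) (ne30 : a3 ≠ c2) (ne31 : b0 ≠ b1) (ne32 : b0 ≠ b2) (ne33 : b0 ≠ c0) (ne34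 : b0 ≠ c1) (ne35 : b0 ≠ c2) (ne36 : b1 ≠ b2) (ne37 : b1 ≠ c0) (ne38 : b1 ≠ c1) (ne39 : b1 ≠ c2) (ne40 : b2 ≠ c0) (ne41 : b2 ≠ c1) (ne42 : b2 ≠ c2) (ne43 : c0 ≠ c1) (ne44 : c0 ≠ c2) (ne45 : c1 ≠ c2)
    (h1 : G.Adj a0 a1) (h2 : G.Adj a0 a3) (h3 : G.Adj a0 b0) (h4 : G.Adj b0 b1)
    (h5 : G.Adj a1 a2) (h6 : G.Adj a2 a3) (h7 : G.Adj a2 b2) (h8 : G.Adj b1 b2)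
    (h9 : G.Adj c0 c1) (h10 : G.Adj a1 c0) (h11 : G.Adj c1 c2) (h12 : G.Adj a3 c2)
    (h13 : G.Adj b1 c1) :
    G.ContainsSubdivisionOf (completeBipartiteGraph (Fin 3) (Fin 3)) := by
  have hinj : Function.Injective (![a0,a1,a2,a3,b0,b1,b2,c0,c1,c2] : Fin 10 → V) := by
    intro x y h
    fin_cases x <;> fin_cases y <;>
      first
        | rfl
        | (simp only [Matrix.cons_val_zero, Matrix.cons_val_one, Matrix.head_cons,
              Matrix.cons_val_succ] at h
           first | exact absurd h (by assumption) | exact absurd h.symm (by assumption))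
  have h1' := h1.symm; have h2' := h2.symm; have h3' := h3.symm; have h4' := h4.symm
  have h5' := h5.symm; have h6' := h6.symm; have h7' := h7.symm; have h8' := h8.symm
  have h9' := h9.symm; have h10' := h10.symm; have h11' := h11.symm; have h12' := h12.symm
  have h13' := h13.symm
  have madj : ∀ x y, Fr10.Adj x y → G.Adj ((![a0,a1,a2,a3,b0,b1,b2,c0,c1,c2] : Fin 10 → V) x)
      (![a0,a1,a2,a3,b0,b1,b2,c0,c1,c2] y) := by
    intro x y hxy
    fin_cases x <;> fin_cases y <;>
      first
        | exact absurd hxy (by decide)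
        | (simp only [Matrix.cons_val_zero, Matrix.cons_val_one, Matrix.head_cons,
            Matrix.cons_val_succ]; assumption)
  exact ⟨Frsub.comp ⟨(![a0,a1,a2,a3,b0,b1,b2,c0,c1,c2] : Fin 10 → V), @fun x y h => madj x y h⟩
    hinj⟩


set_option maxHeartbeats 4000000 in
/-- There is no cubic bipartite planar square-complementary graph on 12
vertices. -/
theorem no_cubic_bipartite_planar_squco_on_12 {V : Type*} [Fintype V]
    (G : SimpleGraph V) [DecidableRel G.Adj] (hcard : Fintype.card V = 12)
    (hcubic : G.IsRegularOfDegree 3) (hbip : ∃ A B, G.IsBipartitionOf A B)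
    (hplanar : G.IsPlanar) : ¬ G.IsSquco := by
  intro hsq
  obtain ⟨φ⟩ := hsq
  obtain ⟨A, B, hA, hAB⟩ := hbip
  classical
  -- parity
  have hopp : ∀ ⦃u v⦄, G.Adj u v → ((u ∈ A) ↔ ¬ (v ∈ A)) := by
    intro u v h
    rcases hAB h with ⟨hu, hv⟩ | ⟨hu, hv⟩
    · exact ⟨fun _ hvA => (hA v).mp hvA hv, fun _ => hu⟩
    · exact ⟨fun huA _ => (hA u).mp huA hu, fun hnvA => absurd hv hnvA⟩
  -- degrees
  have hdeg : ∀ v, (G.neighborFinset v).card = 3 := fun v => hcubic v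
  have hsqdeg : ∀ v, (G.square.neighborFinset v).card = 8 := by
    intro v
    have h1 : (G.square.neighborFinset v).card = Fintype.card (G.square.neighborSet v) := by
      simp [neighborFinset_def, Set.toFinset_card]
    have h2 : Fintype.card (G.square.neighborSet v) = Fintype.card (Gᶜ.neighborSet (φ v)) :=
      Fintype.card_congr (φ.mapNeighborSet v)
    have h3 : Fintype.card (Gᶜ.neighborSet (φ v)) = Gᶜ.degree (φ v) :=
      Gᶜ.card_neighborSet_eq_degree (φ v)
    have h4 : Gᶜ.degree (φ v) = 8 := by
      rw [degree_compl, hcubic (φ v), hcard]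
    rw [h1, h2, h3, h4]
  -- the key local lemma
  have key : ∀ v : V, ∃ u a b,
      (G.Adj v a ∧ G.Adj v b ∧ G.Adj a u ∧ G.Adj b u ∧ a ≠ b ∧ v ≠ u ∧ ¬ G.Adj v u) ∧
      (∀ u' a' b', G.Adj v a' → G.Adj v b' → G.Adj a' u' → G.Adj b' u' → a' ≠ b' → v ≠ u' →
        (u' = u ∧ (a' = a ∧ b' = b ∨ a' = b ∧ b' = a))) := by
    intro v
    set N := G.neighborFinset v with hN
    have hsub : N ⊆ G.square.neighborFinset v := by
      intro x hx
      rw [mem_neighborFinset] at hx ⊢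
      exact ⟨G.ne_of_adj hx, Or.inl hx⟩
    set S := G.square.neighborFinset v \ N with hS
    have hScard : S.card = 5 := by
      rw [hS, card_sdiff_of_subset hsub, hsqdeg, hdeg]
    -- the count function
    set c : V → ℕ := fun u => (N.filter (fun n => G.Adj n u)).card with hc
    have hnotriangle : ∀ ⦃x y z⦄, G.Adj x y → G.Adj y z → G.Adj z x → False := by
      intro x y z h1 h2 h3
      have := hopp h1; have := hopp h2; have := hopp h3; tauto
    have hfilter : ∀ n ∈ N, S.filter (fun u => G.Adj n u) = (G.neighborFinset n).erase v := by
      intro n hn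
      rw [mem_neighborFinset] at hn
      ext u
      simp only [mem_filter, mem_erase, mem_neighborFinset, hS, mem_sdiff, hN] at *
      simp only [SimpleGraph.square] at *
      constructor
      · rintro ⟨⟨⟨hne, -⟩, -⟩, hnu⟩
        exact ⟨fun h => hne h.symm, hnu⟩
      · rintro ⟨hne, hnu⟩
        refine ⟨⟨⟨fun h => hne h.symm, Or.inr ⟨n, hn, hnu⟩⟩, fun hvu => ?_⟩, hnu⟩
        exact hnotriangle hvu hnu.symm hn.symm
    have hsum : ∑ u ∈ S, c u = 6 := by
      have : ∑ u ∈ S, c u = ∑ n ∈ N, (S.filter (fun u => G.Adj n u)).card := by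
        simp only [hc, card_filter]
        rw [Finset.sum_comm]
      rw [this]
      have : ∀ n ∈ N, (S.filter (fun u => G.Adj n u)).card = 2 := by
        intro n hn
        rw [hfilter n hn, card_erase_of_mem, hdeg]
        rw [mem_neighborFinset] at hn ⊢
        exact hn.symm
      rw [Finset.sum_congr rfl this]
      simp [hdeg, hN]
    have hge1 : ∀ u ∈ S, 1 ≤ c u := by
      intro u hu
      rw [hS, mem_sdiff, mem_neighborFinset] at hu
      obtain ⟨⟨hne, hor⟩, hnadj⟩ := hu
      rcases hor with h | ⟨w, hw1, hw2⟩
      · exact absurd (by rwa [mem_neighborFinset]) hnadj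
      · rw [hc, Nat.one_le_iff_ne_zero, ← Nat.pos_iff_ne_zero, card_pos]
        exact ⟨w, by simp [hN, mem_neighborFinset, hw1, hw2]⟩
    have hex2 : ∃ u0 ∈ S, 2 ≤ c u0 := by
      by_contra hcon
      push_neg at hcon
      have : ∀ u ∈ S, c u = 1 := by
        intro u hu
        have h1 := hcon u hu; have h2 := hge1 u hu; omega
      rw [Finset.sum_congr rfl this] at hsum
      simp [hScard] at hsum
    obtain ⟨u0, hu0S, hu0c⟩ := hex2
    have hrest : ∀ u ∈ S, u ≠ u0 → c u = 1 := by
      by_contra hcon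
      push_neg at hcon
      obtain ⟨u1, hu1S, hu1ne, hu1c⟩ := hcon
      have hu1c' : 2 ≤ c u1 := by
        have := hge1 u1 hu1S; omega
      have e1 : c u0 + ∑ u ∈ S.erase u0, c u = 6 := by
        rw [Finset.add_sum_erase _ _ hu0S]; exact hsum
      have hu1' : u1 ∈ S.erase u0 := mem_erase.mpr ⟨hu1ne, hu1S⟩
      have e2 : c u1 + ∑ u ∈ (S.erase u0).erase u1, c u = ∑ u ∈ S.erase u0, c u := by
        rw [Finset.add_sum_erase _ _ hu1']
      have e3 : ((S.erase u0).erase u1).card = 3 := by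
        rw [card_erase_of_mem hu1', card_erase_of_mem hu0S, hScard]
      have e4 : ((S.erase u0).erase u1).card • 1 ≤ ∑ u ∈ (S.erase u0).erase u1, c u :=
        Finset.card_nsmul_le_sum _ _ _ (fun u hu => hge1 u (mem_of_mem_erase (mem_of_mem_erase hu)))
      simp only [smul_eq_mul, mul_one] at e4
      rw [e3] at e4
      omega
    have hc0 : c u0 = 2 := by
      have e1 : c u0 + ∑ u ∈ S.erase u0, c u = 6 := by
        rw [Finset.add_sum_erase _ _ hu0S]; exact hsum
      have : ∀ u ∈ S.erase u0, c u = 1 := fun u hu =>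
        hrest u (mem_of_mem_erase hu) (ne_of_mem_erase hu)
      rw [Finset.sum_congr rfl this] at e1
      simp only [Finset.sum_const, smul_eq_mul, mul_one, card_erase_of_mem hu0S, hScard] at e1
      omega
    obtain ⟨a, b, hab, habset⟩ := Finset.card_eq_two.mp hc0
    have hmema : a ∈ N.filter (fun n => G.Adj n u0) := habset ▸ (by simp)
    have hmemb : b ∈ N.filter (fun n => G.Adj n u0) := habset ▸ (by simp)
    rw [mem_filter, hN, mem_neighborFinset] at hmema hmemb
    have hu0S' := hu0S
    rw [hS, mem_sdiff, mem_neighborFinset, mem_neighborFinset] at hu0S'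
    obtain ⟨⟨hvu0, -⟩, hnadj0⟩ := hu0S'
    refine ⟨u0, a, b, ⟨hmema.1, hmemb.1, hmema.2, hmemb.2, hab, hvu0, hnadj0⟩, ?_⟩
    intro u' a' b' h1 h2 h3 h4 h5 h6
    have hnadj' : ¬ G.Adj v u' := fun hvu' => hnotriangle h1 h3 hvu'.symm
    have hu'S : u' ∈ S := by
      rw [hS, mem_sdiff, mem_neighborFinset, mem_neighborFinset]
      exact ⟨⟨h6, Or.inr ⟨a', h1, h3⟩⟩, hnadj'⟩
    have hc' : 2 ≤ c u' := by
      rw [hc]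
      have hsubs : {a', b'} ⊆ N.filter (fun n => G.Adj n u') := by
        intro x hx
        simp only [Finset.mem_insert, Finset.mem_singleton] at hx
        rcases hx with rfl | rfl <;> simp [hN, mem_neighborFinset, h1, h2, h3, h4]
      calc 2 = ({a', b'} : Finset V).card := (Finset.card_pair h5).symm
        _ ≤ _ := Finset.card_le_card hsubs
    have hu'eq : u' = u0 := by
      by_contra hne
      have := hrest u' hu'S hne; omega
    refine ⟨hu'eq, ?_⟩
    subst hu'eq
    have ha' : a' ∈ ({a, b} : Finset V) := habset ▸ (by simp [mem_filter, hN, mem_neighborFinset, h1, h3])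
    have hb' : b' ∈ ({a, b} : Finset V) := habset ▸ (by simp [mem_filter, hN, mem_neighborFinset, h2, h4])
    simp only [Finset.mem_insert, Finset.mem_singleton] at ha' hb'
    rcases ha' with rfl | rfl <;> rcases hb' with rfl | rfl <;> tauto
  choose U Aa Bb hmain huniq using key
  have hAdjA : ∀ v, G.Adj v (Aa v) := fun v => (hmain v).1
  have hAdjB : ∀ v, G.Adj v (Bb v) := fun v => (hmain v).2.1
  have hAdjAU : ∀ v, G.Adj (Aa v) (U v) := fun v => (hmain v).2.2.1
  have hAdjBU : ∀ v, G.Adj (Bb v) (U v) := fun v => (hmain v).2.2.2.1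
  have hABne : ∀ v, Aa v ≠ Bb v := fun v => (hmain v).2.2.2.2.1
  have hvU : ∀ v, v ≠ U v := fun v => (hmain v).2.2.2.2.2.1
  have hnadjU : ∀ v, ¬ G.Adj v (U v) := fun v => (hmain v).2.2.2.2.2.2
  -- third neighbor
  have hthird : ∀ v, ∃ e, G.Adj v e ∧ e ≠ Aa v ∧ e ≠ Bb v := by
    intro v
    by_contra hcon
    push_neg at hcon
    have hsub : G.neighborFinset v ⊆ {Aa v, Bb v} := by
      intro x hx
      rw [mem_neighborFinset] at hx
      rcases eq_or_ne x (Aa v) with h | h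
      · simp [h]
      · simp [hcon x hx h]
    have := Finset.card_le_card hsub
    rw [hdeg] at this
    have h2 : ({Aa v, Bb v} : Finset V).card ≤ 2 := Finset.card_insert_le _ _ |>.trans (by simp)
    omega
  choose E hE1 hE2 hE3 using hthird
  have hEneU : ∀ v, E v ≠ U v := fun v h => hnadjU v (h ▸ hE1 v)
  have hEnev : ∀ v, E v ≠ v := fun v => (hE1 v).ne'
  have nbr_cases : ∀ v x, G.Adj v x → x = Aa v ∨ x = Bb v ∨ x = E v := by
    intro v x hx
    by_contra hcon
    push_neg at hcon
    obtain ⟨h1, h2, h3⟩ := hcon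
    have hsub : ({x, Aa v, Bb v, E v} : Finset V) ⊆ G.neighborFinset v := by
      intro y hy
      simp only [Finset.mem_insert, Finset.mem_singleton] at hy
      rcases hy with rfl | rfl | rfl | rfl <;>
        rw [mem_neighborFinset] <;> [exact hx; exact hAdjA v; exact hAdjB v; exact hE1 v]
    have hc1 : ({Bb v, E v} : Finset V).card = 2 := Finset.card_pair (fun h => hE3 v h.symm)
    have hc2 : ({Aa v, Bb v, E v} : Finset V).card = 3 := by
      rw [Finset.card_insert_of_notMem, hc1]
      simp only [Finset.mem_insert, Finset.mem_singleton]
      push_neg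
      exact ⟨hABne v, fun h => hE2 v h.symm⟩
    have hc3 : ({x, Aa v, Bb v, E v} : Finset V).card = 4 := by
      rw [Finset.card_insert_of_notMem, hc2]
      simp only [Finset.mem_insert, Finset.mem_singleton]
      push_neg
      exact ⟨h1, h2, h3⟩
    have := Finset.card_le_card hsub
    rw [hdeg, hc3] at this
    omega
  -- re-centered key
  have parity4 : ∀ P Q R S' : Prop, (P ↔ ¬Q) → (R ↔ ¬Q) → (R ↔ ¬S') → (P ↔ S') → False := by
    intro P Q R S' h1 h2 h3 h4; tauto
  have cyc_keyset : ∀ v x1 x2 x3, G.Adj v x1 → G.Adj x1 x2 → G.Adj x2 x3 → G.Adj x3 v →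
      v ≠ x2 → x1 ≠ x3 →
      x2 = U v ∧ (x1 = Aa v ∧ x3 = Bb v ∨ x1 = Bb v ∧ x3 = Aa v) := by
    intro v x1 x2 x3 h1 h2 h3 h4 h5 h6
    exact huniq v x2 x1 x3 h1 h4.symm h2 h3.symm h6 h5
  -- membership transfer: if t is on v's cycle then the two cycles coincide
  have glem : ∀ v t, (t = v ∨ t = Aa v ∨ t = U v ∨ t = Bb v) →
      ∀ s, (s = v ∨ s = Aa v ∨ s = U v ∨ s = Bb v) ↔ (s = t ∨ s = Aa t ∨ s = U t ∨ s = Bb t) := by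
    intro v t ht s
    rcases ht with rfl | rfl | rfl | rfl
    · tauto
    · obtain ⟨hU, hc⟩ := cyc_keyset (Aa v) v (Bb v) (U v)
        (hAdjA v).symm (hAdjB v) (hAdjBU v) (hAdjAU v).symm (hABne v) (hvU v)
      rcases hc with ⟨e1, e2⟩ | ⟨e1, e2⟩ <;> rw [← hU, ← e1, ← e2] <;> tauto
    · obtain ⟨hU, hc⟩ := cyc_keyset (U v) (Aa v) v (Bb v)
        (hAdjAU v).symm (hAdjA v).symm (hAdjB v) (hAdjBU v) (hvU v).symm (hABne v)
      rcases hc with ⟨e1, e2⟩ | ⟨e1, e2⟩ <;> rw [← hU, ← e1, ← e2] <;> tauto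
    · obtain ⟨hU, hc⟩ := cyc_keyset (Bb v) v (Aa v) (U v)
        (hAdjB v).symm (hAdjA v) (hAdjAU v) (hAdjBU v).symm (hABne v).symm (hvU v)
      rcases hc with ⟨e1, e2⟩ | ⟨e1, e2⟩ <;> rw [← hU, ← e1, ← e2] <;> tauto
  have hsym : ∀ v w, (w = v ∨ w = Aa v ∨ w = U v ∨ w = Bb v) →
      (v = w ∨ v = Aa w ∨ v = U w ∨ v = Bb w) := fun v w h => (glem v w h v).mp (Or.inl rfl)
  have hextn : ∀ w t x, (t = w ∨ t = Aa w ∨ t = U w ∨ t = Bb w) →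
      ¬(x = w ∨ x = Aa w ∨ x = U w ∨ x = Bb w) → G.Adj t x → x = E t := by
    intro w t x ht hx hadj
    rcases nbr_cases t x hadj with h | h | h
    · exact absurd ((glem w t ht x).mpr (Or.inr (Or.inl h))) hx
    · exact absurd ((glem w t ht x).mpr (Or.inr (Or.inr (Or.inr h)))) hx
    · exact h
  -- parity of the four neighbors
  have pch : ∀ v, ((Aa v ∈ A) ↔ ¬(v ∈ A)) ∧ ((U v ∈ A) ↔ (v ∈ A)) ∧
      ((Bb v ∈ A) ↔ ¬(v ∈ A)) ∧ ((E v ∈ A) ↔ ¬(v ∈ A)) := by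
    intro v
    have h1 := hopp (hAdjA v)
    have h2 := hopp (hAdjAU v)
    have h3 := hopp (hAdjB v)
    have h4 := hopp (hE1 v)
    refine ⟨by tauto, by tauto, by tauto, by tauto⟩
  obtain ⟨a0⟩ : Nonempty V := Fintype.card_pos_iff.mp (by omega)
  obtain ⟨a1, ha1⟩ : ∃ x, x = Aa a0 := ⟨_, rfl⟩
  obtain ⟨a2, ha2⟩ : ∃ x, x = U a0 := ⟨_, rfl⟩
  obtain ⟨a3, ha3⟩ : ∃ x, x = Bb a0 := ⟨_, rfl⟩
  obtain ⟨b0, hb0⟩ : ∃ x, x = E a0 := ⟨_, rfl⟩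
  obtain ⟨b1, hb1⟩ : ∃ x, x = Aa b0 := ⟨_, rfl⟩
  obtain ⟨b2, hb2⟩ : ∃ x, x = U b0 := ⟨_, rfl⟩
  obtain ⟨b3, hb3⟩ : ∃ x, x = Bb b0 := ⟨_, rfl⟩
  obtain ⟨c0, hc0⟩ : ∃ x, x = E a1 := ⟨_, rfl⟩
  obtain ⟨c1, hc1⟩ : ∃ x, x = Aa c0 := ⟨_, rfl⟩
  obtain ⟨c2, hc2⟩ : ∃ x, x = U c0 := ⟨_, rfl⟩
  obtain ⟨c3, hc3⟩ : ∃ x, x = Bb c0 := ⟨_, rfl⟩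
  -- edges
  have hA01 : G.Adj a0 a1 := ha1 ▸ hAdjA a0
  have hA12 : G.Adj a1 a2 := by rw [ha1, ha2]; exact hAdjAU a0
  have hA32 : G.Adj a3 a2 := by rw [ha3, ha2]; exact hAdjBU a0
  have hA03 : G.Adj a0 a3 := ha3 ▸ hAdjB a0
  have hA0b0 : G.Adj a0 b0 := hb0 ▸ hE1 a0
  have hB01 : G.Adj b0 b1 := hb1 ▸ hAdjA b0
  have hB12 : G.Adj b1 b2 := by rw [hb1, hb2]; exact hAdjAU b0
  have hB32 : G.Adj b3 b2 := by rw [hb3, hb2]; exact hAdjBU b0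
  have hB03 : G.Adj b0 b3 := hb3 ▸ hAdjB b0
  have hA1c0 : G.Adj a1 c0 := hc0 ▸ hE1 a1
  have hC01 : G.Adj c0 c1 := hc1 ▸ hAdjA c0
  have hC12 : G.Adj c1 c2 := by rw [hc1, hc2]; exact hAdjAU c0
  have hC32 : G.Adj c3 c2 := by rw [hc3, hc2]; exact hAdjBU c0
  have hC03 : G.Adj c0 c3 := hc3 ▸ hAdjB c0
  -- name-form cycle membership conversions
  have eqA : ∀ s : V, (s = a0 ∨ s = Aa a0 ∨ s = U a0 ∨ s = Bb a0) ↔ (s = a0 ∨ s = a1 ∨ s = a2 ∨ s = a3) := by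
    intro s; rw [← ha1, ← ha2, ← ha3]
  have eqB : ∀ s : V, (s = b0 ∨ s = Aa b0 ∨ s = U b0 ∨ s = Bb b0) ↔ (s = b0 ∨ s = b1 ∨ s = b2 ∨ s = b3) := by
    intro s; rw [← hb1, ← hb2, ← hb3]
  have eqC : ∀ s : V, (s = c0 ∨ s = Aa c0 ∨ s = U c0 ∨ s = Bb c0) ↔ (s = c0 ∨ s = c1 ∨ s = c2 ∨ s = c3) := by
    intro s; rw [← hc1, ← hc2, ← hc3]
  -- b0 not on cycle A
  have hb0nA : ¬(b0 = a0 ∨ b0 = a1 ∨ b0 = a2 ∨ b0 = a3) := by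
    simp only [hb0, ha1, ha2, ha3]
    push_neg
    exact ⟨hEnev a0, hE2 a0, hEneU a0, hE3 a0⟩
  have hdisjBA : ∀ t, (t = b0 ∨ t = b1 ∨ t = b2 ∨ t = b3) → ¬(t = a0 ∨ t = a1 ∨ t = a2 ∨ t = a3) := by
    intro t htB htA
    have h1 := glem b0 t ((eqB t).mpr htB)
    have h2 := glem a0 t ((eqA t).mpr htA)
    exact hb0nA ((eqA b0).mp ((h2 b0).mpr ((h1 b0).mp ((eqB b0).mpr (Or.inl rfl)))))
  have hdisjAB : ∀ t, (t = a0 ∨ t = a1 ∨ t = a2 ∨ t = a3) → ¬(t = b0 ∨ t = b1 ∨ t = b2 ∨ t = b3) := fun t ha hb => hdisjBA t hb ha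
  -- wrappers for the unique external neighbor
  have hextA : ∀ t x, (t = a0 ∨ t = a1 ∨ t = a2 ∨ t = a3) → ¬(x = a0 ∨ x = a1 ∨ x = a2 ∨ x = a3) → G.Adj t x → x = E t :=
    fun t x ht hx hadj => hextn a0 t x ((eqA t).mpr ht) (fun hh => hx ((eqA x).mp hh)) hadj
  have hextB : ∀ t x, (t = b0 ∨ t = b1 ∨ t = b2 ∨ t = b3) → ¬(x = b0 ∨ x = b1 ∨ x = b2 ∨ x = b3) → G.Adj t x → x = E t :=
    fun t x ht hx hadj => hextn b0 t x ((eqB t).mpr ht) (fun hh => hx ((eqB x).mp hh)) hadj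
  have hextC : ∀ t x, (t = c0 ∨ t = c1 ∨ t = c2 ∨ t = c3) → ¬(x = c0 ∨ x = c1 ∨ x = c2 ∨ x = c3) → G.Adj t x → x = E t :=
    fun t x ht hx hadj => hextn c0 t x ((eqC t).mpr ht) (fun hh => hx ((eqC x).mp hh)) hadj
  have ha0Eb0 : a0 = E b0 :=
    hextB b0 a0 (Or.inl rfl) (fun hh => hdisjBA a0 hh (Or.inl rfl)) hA0b0.symm
  -- c0 is not on cycle A
  have hc0nA : ¬(c0 = a0 ∨ c0 = a1 ∨ c0 = a2 ∨ c0 = a3) := by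
    intro h
    have h1 := glem a0 a1 (Or.inr (Or.inl ha1))
    have h2 := (h1 c0).mp ((eqA c0).mpr h)
    rw [hc0] at h2
    rcases h2 with h2 | h2 | h2 | h2
    · exact hEnev a1 h2
    · exact hE2 a1 h2
    · exact hEneU a1 h2
    · exact hE3 a1 h2
  have hdisjCA : ∀ t, (t = c0 ∨ t = c1 ∨ t = c2 ∨ t = c3) → ¬(t = a0 ∨ t = a1 ∨ t = a2 ∨ t = a3) := by
    intro t htC htA
    have h1 := glem c0 t ((eqC t).mpr htC)
    have h2 := glem a0 t ((eqA t).mpr htA)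
    exact hc0nA ((eqA c0).mp ((h2 c0).mpr ((h1 c0).mp ((eqC c0).mpr (Or.inl rfl)))))
  have hdisjAC : ∀ t, (t = a0 ∨ t = a1 ∨ t = a2 ∨ t = a3) → ¬(t = c0 ∨ t = c1 ∨ t = c2 ∨ t = c3) := fun t ha hc => hdisjCA t hc ha
  -- c0 is not on cycle B
  have hc0nB : ¬(c0 = b0 ∨ c0 = b1 ∨ c0 = b2 ∨ c0 = b3) := by
    rintro (h | h | h | h)
    · have h1 : a1 = E b0 :=
        hextB b0 a1 (Or.inl rfl) (fun hh => hdisjBA a1 hh (Or.inr (Or.inl rfl)))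
          (h ▸ hA1c0.symm)
      exact hA01.ne (h1.trans ha0Eb0.symm).symm
    · obtain ⟨hu, -⟩ := cyc_keyset a0 a1 c0 b0 hA01 hA1c0
        (by rw [h, hb1]; exact (hAdjA b0).symm) hA0b0.symm
        (fun e => hc0nA (Or.inl e.symm))
        (fun e => hdisjBA b0 (Or.inl rfl) (Or.inr (Or.inl e.symm)))
      exact hc0nA (Or.inr (Or.inr (Or.inl (by rw [hu, ha2]))))
    · have p1 := (pch a1).2.2.2
      rw [← hc0, h] at p1
      have p2 := hopp hA01
      have p3 := hopp hA0b0
      have p4 := (pch b0).2.1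
      rw [← hb2] at p4
      exact parity4 _ _ _ _ p1 p2 p3 p4
    · obtain ⟨hu, -⟩ := cyc_keyset a0 a1 c0 b0 hA01 hA1c0
        (by rw [h, hb3]; exact (hAdjB b0).symm) hA0b0.symm
        (fun e => hc0nA (Or.inl e.symm))
        (fun e => hdisjBA b0 (Or.inl rfl) (Or.inr (Or.inl e.symm)))
      exact hc0nA (Or.inr (Or.inr (Or.inl (by rw [hu, ha2]))))
  have hdisjCB : ∀ t, (t = c0 ∨ t = c1 ∨ t = c2 ∨ t = c3) → ¬(t = b0 ∨ t = b1 ∨ t = b2 ∨ t = b3) := by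
    intro t htC htB
    have h1 := glem c0 t ((eqC t).mpr htC)
    have h2 := glem b0 t ((eqB t).mpr htB)
    exact hc0nB ((eqB c0).mp ((h2 c0).mpr ((h1 c0).mp ((eqC c0).mpr (Or.inl rfl)))))
  have hdisjBC : ∀ t, (t = b0 ∨ t = b1 ∨ t = b2 ∨ t = b3) → ¬(t = c0 ∨ t = c1 ∨ t = c2 ∨ t = c3) := fun t hb hc => hdisjCB t hc hb
  have ha1Ec0 : a1 = E c0 :=
    hextC c0 a1 (Or.inl rfl) (fun hh => hdisjCA a1 hh (Or.inr (Or.inl rfl))) hA1c0.symm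
  have nn_a0_a1 : a0 ≠ a1 := hA01.ne
  have nn_a0_a2 : a0 ≠ a2 := (by rw [ha2]; exact hvU a0)
  have nn_a0_a3 : a0 ≠ a3 := hA03.ne
  have nn_a0_b0 : a0 ≠ b0 := (fun h => hdisjAB b0 (h ▸ Or.inl rfl) (Or.inl rfl))
  have nn_a0_b1 : a0 ≠ b1 := (fun h => hdisjAB b1 (h ▸ Or.inl rfl) (Or.inr (Or.inl rfl)))
  have nn_a0_b2 : a0 ≠ b2 := (fun h => hdisjAB b2 (h ▸ Or.inl rfl) (Or.inr (Or.inr (Or.inl rfl))))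
  have nn_a0_b3 : a0 ≠ b3 := (fun h => hdisjAB b3 (h ▸ Or.inl rfl) (Or.inr (Or.inr (Or.inr rfl))))
  have nn_a0_c0 : a0 ≠ c0 := (fun h => hdisjAC c0 (h ▸ Or.inl rfl) (Or.inl rfl))
  have nn_a0_c1 : a0 ≠ c1 := (fun h => hdisjAC c1 (h ▸ Or.inl rfl) (Or.inr (Or.inl rfl)))
  have nn_a0_c2 : a0 ≠ c2 := (fun h => hdisjAC c2 (h ▸ Or.inl rfl) (Or.inr (Or.inr (Or.inl rfl))))
  have nn_a0_c3 : a0 ≠ c3 := (fun h => hdisjAC c3 (h ▸ Or.inl rfl) (Or.inr (Or.inr (Or.inr rfl))))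
  have nn_a1_a2 : a1 ≠ a2 := hA12.ne
  have nn_a1_a3 : a1 ≠ a3 := (by rw [ha1, ha3]; exact hABne a0)
  have nn_a1_b0 : a1 ≠ b0 := (fun h => hdisjAB b0 (h ▸ Or.inr (Or.inl rfl)) (Or.inl rfl))
  have nn_a1_b1 : a1 ≠ b1 := (fun h => hdisjAB b1 (h ▸ Or.inr (Or.inl rfl)) (Or.inr (Or.inl rfl)))
  have nn_a1_b2 : a1 ≠ b2 := (fun h => hdisjAB b2 (h ▸ Or.inr (Or.inl rfl)) (Or.inr (Or.inr (Or.inl rfl))))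
  have nn_a1_b3 : a1 ≠ b3 := (fun h => hdisjAB b3 (h ▸ Or.inr (Or.inl rfl)) (Or.inr (Or.inr (Or.inr rfl))))
  have nn_a1_c0 : a1 ≠ c0 := (fun h => hdisjAC c0 (h ▸ Or.inr (Or.inl rfl)) (Or.inl rfl))
  have nn_a1_c1 : a1 ≠ c1 := (fun h => hdisjAC c1 (h ▸ Or.inr (Or.inl rfl)) (Or.inr (Or.inl rfl)))
  have nn_a1_c2 : a1 ≠ c2 := (fun h => hdisjAC c2 (h ▸ Or.inr (Or.inl rfl)) (Or.inr (Or.inr (Or.inl rfl))))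
  have nn_a1_c3 : a1 ≠ c3 := (fun h => hdisjAC c3 (h ▸ Or.inr (Or.inl rfl)) (Or.inr (Or.inr (Or.inr rfl))))
  have nn_a2_a3 : a2 ≠ a3 := hA32.ne'
  have nn_a2_b0 : a2 ≠ b0 := (fun h => hdisjAB b0 (h ▸ Or.inr (Or.inr (Or.inl rfl))) (Or.inl rfl))
  have nn_a2_b1 : a2 ≠ b1 := (fun h => hdisjAB b1 (h ▸ Or.inr (Or.inr (Or.inl rfl))) (Or.inr (Or.inl rfl)))
  have nn_a2_b2 : a2 ≠ b2 := (fun h => hdisjAB b2 (h ▸ Or.inr (Or.inr (Or.inl rfl))) (Or.inr (Or.inr (Or.inl rfl))))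
  have nn_a2_b3 : a2 ≠ b3 := (fun h => hdisjAB b3 (h ▸ Or.inr (Or.inr (Or.inl rfl))) (Or.inr (Or.inr (Or.inr rfl))))
  have nn_a2_c0 : a2 ≠ c0 := (fun h => hdisjAC c0 (h ▸ Or.inr (Or.inr (Or.inl rfl))) (Or.inl rfl))
  have nn_a2_c1 : a2 ≠ c1 := (fun h => hdisjAC c1 (h ▸ Or.inr (Or.inr (Or.inl rfl))) (Or.inr (Or.inl rfl)))
  have nn_a2_c2 : a2 ≠ c2 := (fun h => hdisjAC c2 (h ▸ Or.inr (Or.inr (Or.inl rfl))) (Or.inr (Or.inr (Or.inl rfl))))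
  have nn_a2_c3 : a2 ≠ c3 := (fun h => hdisjAC c3 (h ▸ Or.inr (Or.inr (Or.inl rfl))) (Or.inr (Or.inr (Or.inr rfl))))
  have nn_a3_b0 : a3 ≠ b0 := (fun h => hdisjAB b0 (h ▸ Or.inr (Or.inr (Or.inr rfl))) (Or.inl rfl))
  have nn_a3_b1 : a3 ≠ b1 := (fun h => hdisjAB b1 (h ▸ Or.inr (Or.inr (Or.inr rfl))) (Or.inr (Or.inl rfl)))
  have nn_a3_b2 : a3 ≠ b2 := (fun h => hdisjAB b2 (h ▸ Or.inr (Or.inr (Or.inr rfl))) (Or.inr (Or.inr (Or.inl rfl))))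
  have nn_a3_b3 : a3 ≠ b3 := (fun h => hdisjAB b3 (h ▸ Or.inr (Or.inr (Or.inr rfl))) (Or.inr (Or.inr (Or.inr rfl))))
  have nn_a3_c0 : a3 ≠ c0 := (fun h => hdisjAC c0 (h ▸ Or.inr (Or.inr (Or.inr rfl))) (Or.inl rfl))
  have nn_a3_c1 : a3 ≠ c1 := (fun h => hdisjAC c1 (h ▸ Or.inr (Or.inr (Or.inr rfl))) (Or.inr (Or.inl rfl)))
  have nn_a3_c2 : a3 ≠ c2 := (fun h => hdisjAC c2 (h ▸ Or.inr (Or.inr (Or.inr rfl))) (Or.inr (Or.inr (Or.inl rfl))))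
  have nn_a3_c3 : a3 ≠ c3 := (fun h => hdisjAC c3 (h ▸ Or.inr (Or.inr (Or.inr rfl))) (Or.inr (Or.inr (Or.inr rfl))))
  have nn_b0_b1 : b0 ≠ b1 := hB01.ne
  have nn_b0_b2 : b0 ≠ b2 := (by rw [hb2]; exact hvU b0)
  have nn_b0_b3 : b0 ≠ b3 := hB03.ne
  have nn_b0_c0 : b0 ≠ c0 := (fun h => hdisjBC c0 (h ▸ Or.inl rfl) (Or.inl rfl))
  have nn_b0_c1 : b0 ≠ c1 := (fun h => hdisjBC c1 (h ▸ Or.inl rfl) (Or.inr (Or.inl rfl)))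
  have nn_b0_c2 : b0 ≠ c2 := (fun h => hdisjBC c2 (h ▸ Or.inl rfl) (Or.inr (Or.inr (Or.inl rfl))))
  have nn_b0_c3 : b0 ≠ c3 := (fun h => hdisjBC c3 (h ▸ Or.inl rfl) (Or.inr (Or.inr (Or.inr rfl))))
  have nn_b1_b2 : b1 ≠ b2 := hB12.ne
  have nn_b1_b3 : b1 ≠ b3 := (by rw [hb1, hb3]; exact hABne b0)
  have nn_b1_c0 : b1 ≠ c0 := (fun h => hdisjBC c0 (h ▸ Or.inr (Or.inl rfl)) (Or.inl rfl))
  have nn_b1_c1 : b1 ≠ c1 := (fun h => hdisjBC c1 (h ▸ Or.inr (Or.inl rfl)) (Or.inr (Or.inl rfl)))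
  have nn_b1_c2 : b1 ≠ c2 := (fun h => hdisjBC c2 (h ▸ Or.inr (Or.inl rfl)) (Or.inr (Or.inr (Or.inl rfl))))
  have nn_b1_c3 : b1 ≠ c3 := (fun h => hdisjBC c3 (h ▸ Or.inr (Or.inl rfl)) (Or.inr (Or.inr (Or.inr rfl))))
  have nn_b2_b3 : b2 ≠ b3 := hB32.ne'
  have nn_b2_c0 : b2 ≠ c0 := (fun h => hdisjBC c0 (h ▸ Or.inr (Or.inr (Or.inl rfl))) (Or.inl rfl))
  have nn_b2_c1 : b2 ≠ c1 := (fun h => hdisjBC c1 (h ▸ Or.inr (Or.inr (Or.inl rfl))) (Or.inr (Or.inl rfl)))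
  have nn_b2_c2 : b2 ≠ c2 := (fun h => hdisjBC c2 (h ▸ Or.inr (Or.inr (Or.inl rfl))) (Or.inr (Or.inr (Or.inl rfl))))
  have nn_b2_c3 : b2 ≠ c3 := (fun h => hdisjBC c3 (h ▸ Or.inr (Or.inr (Or.inl rfl))) (Or.inr (Or.inr (Or.inr rfl))))
  have nn_b3_c0 : b3 ≠ c0 := (fun h => hdisjBC c0 (h ▸ Or.inr (Or.inr (Or.inr rfl))) (Or.inl rfl))
  have nn_b3_c1 : b3 ≠ c1 := (fun h => hdisjBC c1 (h ▸ Or.inr (Or.inr (Or.inr rfl))) (Or.inr (Or.inl rfl)))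
  have nn_b3_c2 : b3 ≠ c2 := (fun h => hdisjBC c2 (h ▸ Or.inr (Or.inr (Or.inr rfl))) (Or.inr (Or.inr (Or.inl rfl))))
  have nn_b3_c3 : b3 ≠ c3 := (fun h => hdisjBC c3 (h ▸ Or.inr (Or.inr (Or.inr rfl))) (Or.inr (Or.inr (Or.inr rfl))))
  have nn_c0_c1 : c0 ≠ c1 := hC01.ne
  have nn_c0_c2 : c0 ≠ c2 := (by rw [hc2]; exact hvU c0)
  have nn_c0_c3 : c0 ≠ c3 := hC03.ne
  have nn_c1_c2 : c1 ≠ c2 := hC12.ne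
  have nn_c1_c3 : c1 ≠ c3 := (by rw [hc1, hc3]; exact hABne c0)
  have nn_c2_c3 : c2 ≠ c3 := hC32.ne'
  have hcov : ∀ x : V, x = a0 ∨ x = a1 ∨ x = a2 ∨ x = a3 ∨ x = b0 ∨ x = b1 ∨ x = b2 ∨ x = b3 ∨ x = c0 ∨ x = c1 ∨ x = c2 ∨ x = c3 := by
    have hc12 : ({a0, a1, a2, a3, b0, b1, b2, b3, c0, c1, c2, c3} : Finset V).card = 12 := by
      have hnm0 : a0 ∉ ({a1, a2, a3, b0, b1, b2, b3, c0, c1, c2, c3} : Finset V) := by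
        simp only [Finset.mem_insert, Finset.mem_singleton]
        push_neg
        exact ⟨nn_a0_a1, nn_a0_a2, nn_a0_a3, nn_a0_b0, nn_a0_b1, nn_a0_b2, nn_a0_b3, nn_a0_c0, nn_a0_c1, nn_a0_c2, nn_a0_c3⟩
      have hnm1 : a1 ∉ ({a2, a3, b0, b1, b2, b3, c0, c1, c2, c3} : Finset V) := by
        simp only [Finset.mem_insert, Finset.mem_singleton]
        push_neg
        exact ⟨nn_a1_a2, nn_a1_a3, nn_a1_b0, nn_a1_b1, nn_a1_b2, nn_a1_b3, nn_a1_c0, nn_a1_c1, nn_a1_c2, nn_a1_c3⟩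
      have hnm2 : a2 ∉ ({a3, b0, b1, b2, b3, c0, c1, c2, c3} : Finset V) := by
        simp only [Finset.mem_insert, Finset.mem_singleton]
        push_neg
        exact ⟨nn_a2_a3, nn_a2_b0, nn_a2_b1, nn_a2_b2, nn_a2_b3, nn_a2_c0, nn_a2_c1, nn_a2_c2, nn_a2_c3⟩
      have hnm3 : a3 ∉ ({b0, b1, b2, b3, c0, c1, c2, c3} : Finset V) := by
        simp only [Finset.mem_insert, Finset.mem_singleton]
        push_neg
        exact ⟨nn_a3_b0, nn_a3_b1, nn_a3_b2, nn_a3_b3, nn_a3_c0, nn_a3_c1, nn_a3_c2, nn_a3_c3⟩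
      have hnm4 : b0 ∉ ({b1, b2, b3, c0, c1, c2, c3} : Finset V) := by
        simp only [Finset.mem_insert, Finset.mem_singleton]
        push_neg
        exact ⟨nn_b0_b1, nn_b0_b2, nn_b0_b3, nn_b0_c0, nn_b0_c1, nn_b0_c2, nn_b0_c3⟩
      have hnm5 : b1 ∉ ({b2, b3, c0, c1, c2, c3} : Finset V) := by
        simp only [Finset.mem_insert, Finset.mem_singleton]
        push_neg
        exact ⟨nn_b1_b2, nn_b1_b3, nn_b1_c0, nn_b1_c1, nn_b1_c2, nn_b1_c3⟩
      have hnm6 : b2 ∉ ({b3, c0, c1, c2, c3} : Finset V) := by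
        simp only [Finset.mem_insert, Finset.mem_singleton]
        push_neg
        exact ⟨nn_b2_b3, nn_b2_c0, nn_b2_c1, nn_b2_c2, nn_b2_c3⟩
      have hnm7 : b3 ∉ ({c0, c1, c2, c3} : Finset V) := by
        simp only [Finset.mem_insert, Finset.mem_singleton]
        push_neg
        exact ⟨nn_b3_c0, nn_b3_c1, nn_b3_c2, nn_b3_c3⟩
      have hnm8 : c0 ∉ ({c1, c2, c3} : Finset V) := by
        simp only [Finset.mem_insert, Finset.mem_singleton]
        push_neg
        exact ⟨nn_c0_c1, nn_c0_c2, nn_c0_c3⟩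
      have hnm9 : c1 ∉ ({c2, c3} : Finset V) := by
        simp only [Finset.mem_insert, Finset.mem_singleton]
        push_neg
        exact ⟨nn_c1_c2, nn_c1_c3⟩
      have hnm10 : c2 ∉ ({c3} : Finset V) := by
        simp only [Finset.mem_insert, Finset.mem_singleton]
        push_neg
        exact nn_c2_c3
      rw [Finset.card_insert_of_notMem hnm0, Finset.card_insert_of_notMem hnm1, Finset.card_insert_of_notMem hnm2, Finset.card_insert_of_notMem hnm3, Finset.card_insert_of_notMem hnm4, Finset.card_insert_of_notMem hnm5, Finset.card_insert_of_notMem hnm6, Finset.card_insert_of_notMem hnm7, Finset.card_insert_of_notMem hnm8, Finset.card_insert_of_notMem hnm9, Finset.card_insert_of_notMem hnm10, Finset.card_singleton]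
    have huniv := Finset.eq_univ_of_card _ (hc12.trans hcard.symm)
    intro x
    have hx : x ∈ ({a0, a1, a2, a3, b0, b1, b2, b3, c0, c1, c2, c3} : Finset V) := huniv ▸ Finset.mem_univ x
    simpa using hx
  have parity5 : ∀ P Q R S T : Prop, (P ↔ ¬Q) → (P ↔ ¬R) → (R ↔ ¬S) → (T ↔ ¬S) → (T ↔ ¬Q) → False := by
    intro P Q R S T h1 h2 h3 h4 h5; tauto
  have hpar2 : ∀ P Q S T : Prop, (P ↔ ¬Q) → (Q ↔ T) → (P ↔ ¬S) → (T ↔ ¬S) → False := by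
    intro P Q S T h1 h2 h3 h4; tauto
  have hEa3nA : ¬((E a3) = a0 ∨ (E a3) = a1 ∨ (E a3) = a2 ∨ (E a3) = a3) := by
    intro h
    have h1 := glem a0 a3 (Or.inr (Or.inr (Or.inr ha3)))
    have h2 := (h1 (E a3)).mp ((eqA _).mpr h)
    rcases h2 with h2 | h2 | h2 | h2
    · exact hEnev a3 h2
    · exact hE2 a3 h2
    · exact hEneU a3 h2
    · exact hE3 a3 h2
  have hEa3nB : ¬((E a3) = b0 ∨ (E a3) = b1 ∨ (E a3) = b2 ∨ (E a3) = b3) := by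
    rintro (h | h | h | h)
    · have h1 : a3 = E b0 := hextB b0 a3 (Or.inl rfl) (fun hh => hdisjAB a3 (Or.inr (Or.inr (Or.inr rfl))) hh) (h ▸ (hE1 a3).symm)
      exact nn_a0_a3 (ha0Eb0.trans h1.symm)
    · obtain ⟨hu, -⟩ := cyc_keyset a0 a3 (E a3) b0 hA03 (hE1 a3)
        (by rw [h, hb1]; exact (hAdjA b0).symm) hA0b0.symm
        (fun e => hEa3nA (Or.inl e.symm))
        (fun e => hdisjBA b0 (Or.inl rfl) (Or.inr (Or.inr (Or.inr e.symm))))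
      exact hEa3nA (Or.inr (Or.inr (Or.inl (hu.trans ha2.symm))))
    · have p1 := (pch a3).2.2.2
      rw [h] at p1
      have p2 := hopp hA03
      have p3 := hopp hA0b0
      have p4 := (pch b0).2.1
      rw [← hb2] at p4
      exact parity4 _ _ _ _ p1 p2 p3 p4
    · obtain ⟨hu, -⟩ := cyc_keyset a0 a3 (E a3) b0 hA03 (hE1 a3)
        (by rw [h, hb3]; exact (hAdjB b0).symm) hA0b0.symm
        (fun e => hEa3nA (Or.inl e.symm))
        (fun e => hdisjBA b0 (Or.inl rfl) (Or.inr (Or.inr (Or.inr e.symm))))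
      exact hEa3nA (Or.inr (Or.inr (Or.inl (hu.trans ha2.symm))))
  have hEa3 : E a3 = c2 := by
    rcases hcov (E a3) with h|h|h|h|h|h|h|h|h|h|h|h
    · exact absurd (Or.inl h) hEa3nA
    · exact absurd (Or.inr (Or.inl h)) hEa3nA
    · exact absurd (Or.inr (Or.inr (Or.inl h))) hEa3nA
    · exact absurd (Or.inr (Or.inr (Or.inr h))) hEa3nA
    · exact absurd (Or.inl h) hEa3nB
    · exact absurd (Or.inr (Or.inl h)) hEa3nB
    · exact absurd (Or.inr (Or.inr (Or.inl h))) hEa3nB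
    · exact absurd (Or.inr (Or.inr (Or.inr h))) hEa3nB
    · have h1 : a3 = E c0 := hextC c0 a3 (Or.inl rfl) (fun hh => hdisjAC a3 (Or.inr (Or.inr (Or.inr rfl))) hh) (h ▸ (hE1 a3).symm)
      exact absurd (h1.trans ha1Ec0.symm).symm nn_a1_a3
    · have p1 := (pch a3).2.2.2
      rw [h] at p1
      have p2 := (pch c0).1
      rw [← hc1] at p2
      have p3 := (pch a1).2.2.2
      rw [← hc0] at p3
      have p4 := hopp hA01
      have p5 := hopp hA03
      exact (parity5 _ _ _ _ _ p1 p2 p3 p4 p5).elim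
    · exact h
    · have p1 := (pch a3).2.2.2
      rw [h] at p1
      have p2 := (pch c0).2.2.1
      rw [← hc3] at p2
      have p3 := (pch a1).2.2.2
      rw [← hc0] at p3
      have p4 := hopp hA01
      have p5 := hopp hA03
      exact (parity5 _ _ _ _ _ p1 p2 p3 p4 p5).elim
  have ha3Ec2 : a3 = E c2 :=
    hextC c2 a3 (Or.inr (Or.inr (Or.inl rfl))) (fun hh => hdisjAC a3 (Or.inr (Or.inr (Or.inr rfl))) hh) ((hEa3 ▸ hE1 a3).symm)
  have hEa2nA : ¬((E a2) = a0 ∨ (E a2) = a1 ∨ (E a2) = a2 ∨ (E a2) = a3) := by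
    intro h
    have h1 := glem a0 a2 (Or.inr (Or.inr (Or.inl ha2)))
    have h2 := (h1 (E a2)).mp ((eqA _).mpr h)
    rcases h2 with h2 | h2 | h2 | h2
    · exact hEnev a2 h2
    · exact hE2 a2 h2
    · exact hEneU a2 h2
    · exact hE3 a2 h2
  have hEa2nC : ¬((E a2) = c0 ∨ (E a2) = c1 ∨ (E a2) = c2 ∨ (E a2) = c3) := by
    intro hq
    have hq1 : E a2 = c1 ∨ E a2 = c3 := by
      rcases hq with h | h | h | h
      · have h1 : a2 = E c0 := hextC c0 a2 (Or.inl rfl) (fun hh => hdisjAC a2 (Or.inr (Or.inr (Or.inl rfl))) hh) (h ▸ (hE1 a2).symm)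
        exact absurd (ha1Ec0.trans h1.symm) nn_a1_a2
      · exact Or.inl h
      · have h1 : a2 = E c2 := hextC c2 a2 (Or.inr (Or.inr (Or.inl rfl))) (fun hh => hdisjAC a2 (Or.inr (Or.inr (Or.inl rfl))) hh) (h ▸ (hE1 a2).symm)
        exact absurd (h1.trans ha3Ec2.symm) (fun e => nn_a2_a3 e)
      · exact Or.inr h
    have hEb1cases : E b1 = c1 ∨ E b1 = c3 := by
      have hnB : ¬((E b1) = b0 ∨ (E b1) = b1 ∨ (E b1) = b2 ∨ (E b1) = b3) := by
        intro h
        have h1 := glem b0 b1 (Or.inr (Or.inl hb1))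
        have h2 := (h1 (E b1)).mp ((eqB _).mpr h)
        rcases h2 with h2 | h2 | h2 | h2
        · exact hEnev b1 h2
        · exact hE2 b1 h2
        · exact hEneU b1 h2
        · exact hE3 b1 h2
      have hnA : ¬((E b1) = a0 ∨ (E b1) = a1 ∨ (E b1) = a2 ∨ (E b1) = a3) := by
        rintro (h | h | h | h)
        · have h1 : b1 = E a0 := hextA a0 b1 (Or.inl rfl) (fun hh => hdisjBA b1 (Or.inr (Or.inl rfl)) hh) (h ▸ (hE1 b1).symm)
          exact nn_b0_b1 (hb0.trans h1.symm)
        · have h1 : b1 = E a1 := hextA a1 b1 (Or.inr (Or.inl rfl)) (fun hh => hdisjBA b1 (Or.inr (Or.inl rfl)) hh) (h ▸ (hE1 b1).symm)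
          exact hdisjBC b1 (Or.inr (Or.inl rfl)) (Or.inl (h1.trans hc0.symm))
        · have h1 : b1 = E a2 := hextA a2 b1 (Or.inr (Or.inr (Or.inl rfl))) (fun hh => hdisjBA b1 (Or.inr (Or.inl rfl)) hh) (h ▸ (hE1 b1).symm)
          rcases hq1 with hh | hh
          · exact hdisjBC b1 (Or.inr (Or.inl rfl)) (Or.inr (Or.inl (h1.trans hh)))
          · exact hdisjBC b1 (Or.inr (Or.inl rfl)) (Or.inr (Or.inr (Or.inr (h1.trans hh))))
        · have h1 : b1 = E a3 := hextA a3 b1 (Or.inr (Or.inr (Or.inr rfl))) (fun hh => hdisjBA b1 (Or.inr (Or.inl rfl)) hh) (h ▸ (hE1 b1).symm)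
          exact hdisjBC b1 (Or.inr (Or.inl rfl)) (Or.inr (Or.inr (Or.inl (h1.trans hEa3))))
      rcases hcov (E b1) with h|h|h|h|h|h|h|h|h|h|h|h
      · exact absurd (Or.inl h) hnA
      · exact absurd (Or.inr (Or.inl h)) hnA
      · exact absurd (Or.inr (Or.inr (Or.inl h))) hnA
      · exact absurd (Or.inr (Or.inr (Or.inr h))) hnA
      · exact absurd (Or.inl h) hnB
      · exact absurd (Or.inr (Or.inl h)) hnB
      · exact absurd (Or.inr (Or.inr (Or.inl h))) hnB
      · exact absurd (Or.inr (Or.inr (Or.inr h))) hnB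
      · have h1 : b1 = E c0 := hextC c0 b1 (Or.inl rfl) (fun hh => hdisjBC b1 (Or.inr (Or.inl rfl)) hh) (h ▸ (hE1 b1).symm)
        exact absurd (h1.trans ha1Ec0.symm) (fun e => hdisjBA b1 (Or.inr (Or.inl rfl)) (Or.inr (Or.inl e)))
      · exact Or.inl h
      · have h1 : b1 = E c2 := hextC c2 b1 (Or.inr (Or.inr (Or.inl rfl))) (fun hh => hdisjBC b1 (Or.inr (Or.inl rfl)) hh) (h ▸ (hE1 b1).symm)
        exact absurd (h1.trans ha3Ec2.symm) (fun e => hdisjBA b1 (Or.inr (Or.inl rfl)) (Or.inr (Or.inr (Or.inr e))))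
      · exact Or.inr h

    have hEb3cases : E b3 = c1 ∨ E b3 = c3 := by
      have hnB : ¬((E b3) = b0 ∨ (E b3) = b1 ∨ (E b3) = b2 ∨ (E b3) = b3) := by
        intro h
        have h1 := glem b0 b3 (Or.inr (Or.inr (Or.inr hb3)))
        have h2 := (h1 (E b3)).mp ((eqB _).mpr h)
        rcases h2 with h2 | h2 | h2 | h2
        · exact hEnev b3 h2
        · exact hE2 b3 h2
        · exact hEneU b3 h2
        · exact hE3 b3 h2
      have hnA : ¬((E b3) = a0 ∨ (E b3) = a1 ∨ (E b3) = a2 ∨ (E b3) = a3) := by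
        rintro (h | h | h | h)
        · have h1 : b3 = E a0 := hextA a0 b3 (Or.inl rfl) (fun hh => hdisjBA b3 (Or.inr (Or.inr (Or.inr rfl))) hh) (h ▸ (hE1 b3).symm)
          exact nn_b0_b3 (hb0.trans h1.symm)
        · have h1 : b3 = E a1 := hextA a1 b3 (Or.inr (Or.inl rfl)) (fun hh => hdisjBA b3 (Or.inr (Or.inr (Or.inr rfl))) hh) (h ▸ (hE1 b3).symm)
          exact hdisjBC b3 (Or.inr (Or.inr (Or.inr rfl))) (Or.inl (h1.trans hc0.symm))
        · have h1 : b3 = E a2 := hextA a2 b3 (Or.inr (Or.inr (Or.inl rfl))) (fun hh => hdisjBA b3 (Or.inr (Or.inr (Or.inr rfl))) hh) (h ▸ (hE1 b3).symm)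
          rcases hq1 with hh | hh
          · exact hdisjBC b3 (Or.inr (Or.inr (Or.inr rfl))) (Or.inr (Or.inl (h1.trans hh)))
          · exact hdisjBC b3 (Or.inr (Or.inr (Or.inr rfl))) (Or.inr (Or.inr (Or.inr (h1.trans hh))))
        · have h1 : b3 = E a3 := hextA a3 b3 (Or.inr (Or.inr (Or.inr rfl))) (fun hh => hdisjBA b3 (Or.inr (Or.inr (Or.inr rfl))) hh) (h ▸ (hE1 b3).symm)
          exact hdisjBC b3 (Or.inr (Or.inr (Or.inr rfl))) (Or.inr (Or.inr (Or.inl (h1.trans hEa3))))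
      rcases hcov (E b3) with h|h|h|h|h|h|h|h|h|h|h|h
      · exact absurd (Or.inl h) hnA
      · exact absurd (Or.inr (Or.inl h)) hnA
      · exact absurd (Or.inr (Or.inr (Or.inl h))) hnA
      · exact absurd (Or.inr (Or.inr (Or.inr h))) hnA
      · exact absurd (Or.inl h) hnB
      · exact absurd (Or.inr (Or.inl h)) hnB
      · exact absurd (Or.inr (Or.inr (Or.inl h))) hnB
      · exact absurd (Or.inr (Or.inr (Or.inr h))) hnB
      · have h1 : b3 = E c0 := hextC c0 b3 (Or.inl rfl) (fun hh => hdisjBC b3 (Or.inr (Or.inr (Or.inr rfl))) hh) (h ▸ (hE1 b3).symm)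
        exact absurd (h1.trans ha1Ec0.symm) (fun e => hdisjBA b3 (Or.inr (Or.inr (Or.inr rfl))) (Or.inr (Or.inl e)))
      · exact Or.inl h
      · have h1 : b3 = E c2 := hextC c2 b3 (Or.inr (Or.inr (Or.inl rfl))) (fun hh => hdisjBC b3 (Or.inr (Or.inr (Or.inr rfl))) hh) (h ▸ (hE1 b3).symm)
        exact absurd (h1.trans ha3Ec2.symm) (fun e => hdisjBA b3 (Or.inr (Or.inr (Or.inr rfl))) (Or.inr (Or.inr (Or.inr e))))
      · exact Or.inr h

    have hd1 : E a2 ≠ E b1 := by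
      intro e
      rcases hEb1cases with h | h
      · have u1 : a2 = E c1 := hextC c1 a2 (Or.inr (Or.inl rfl)) (fun hh => hdisjAC a2 (Or.inr (Or.inr (Or.inl rfl))) hh) (by rw [← h, ← e]; exact (hE1 a2).symm)
        have u2 : b1 = E c1 := hextC c1 b1 (Or.inr (Or.inl rfl)) (fun hh => hdisjBC b1 (Or.inr (Or.inl rfl)) hh) (by rw [← h]; exact (hE1 b1).symm)
        exact nn_a2_b1 (u1.trans u2.symm)
      · have u1 : a2 = E c3 := hextC c3 a2 (Or.inr (Or.inr (Or.inr rfl))) (fun hh => hdisjAC a2 (Or.inr (Or.inr (Or.inl rfl))) hh) (by rw [← h, ← e]; exact (hE1 a2).symm)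
        have u2 : b1 = E c3 := hextC c3 b1 (Or.inr (Or.inr (Or.inr rfl))) (fun hh => hdisjBC b1 (Or.inr (Or.inl rfl)) hh) (by rw [← h]; exact (hE1 b1).symm)
        exact nn_a2_b1 (u1.trans u2.symm)
    have hd2 : E a2 ≠ E b3 := by
      intro e
      rcases hEb3cases with h | h
      · have u1 : a2 = E c1 := hextC c1 a2 (Or.inr (Or.inl rfl)) (fun hh => hdisjAC a2 (Or.inr (Or.inr (Or.inl rfl))) hh) (by rw [← h, ← e]; exact (hE1 a2).symm)
        have u2 : b3 = E c1 := hextC c1 b3 (Or.inr (Or.inl rfl)) (fun hh => hdisjBC b3 (Or.inr (Or.inr (Or.inr rfl))) hh) (by rw [← h]; exact (hE1 b3).symm)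
        exact nn_a2_b3 (u1.trans u2.symm)
      · have u1 : a2 = E c3 := hextC c3 a2 (Or.inr (Or.inr (Or.inr rfl))) (fun hh => hdisjAC a2 (Or.inr (Or.inr (Or.inl rfl))) hh) (by rw [← h, ← e]; exact (hE1 a2).symm)
        have u2 : b3 = E c3 := hextC c3 b3 (Or.inr (Or.inr (Or.inr rfl))) (fun hh => hdisjBC b3 (Or.inr (Or.inr (Or.inr rfl))) hh) (by rw [← h]; exact (hE1 b3).symm)
        exact nn_a2_b3 (u1.trans u2.symm)
    have hd3 : E b1 ≠ E b3 := by
      intro e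
      rcases hEb1cases with h | h
      · have u1 : b1 = E c1 := hextC c1 b1 (Or.inr (Or.inl rfl)) (fun hh => hdisjBC b1 (Or.inr (Or.inl rfl)) hh) (by rw [← h]; exact (hE1 b1).symm)
        have u2 : b3 = E c1 := hextC c1 b3 (Or.inr (Or.inl rfl)) (fun hh => hdisjBC b3 (Or.inr (Or.inr (Or.inr rfl))) hh) (by rw [← h, e]; exact (hE1 b3).symm)
        exact nn_b1_b3 (u1.trans u2.symm)
      · have u1 : b1 = E c3 := hextC c3 b1 (Or.inr (Or.inr (Or.inr rfl))) (fun hh => hdisjBC b1 (Or.inr (Or.inl rfl)) hh) (by rw [← h]; exact (hE1 b1).symm)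
        have u2 : b3 = E c3 := hextC c3 b3 (Or.inr (Or.inr (Or.inr rfl))) (fun hh => hdisjBC b3 (Or.inr (Or.inr (Or.inr rfl))) hh) (by rw [← h, e]; exact (hE1 b3).symm)
        exact nn_b1_b3 (u1.trans u2.symm)
    rcases hq1 with h1 | h1 <;> rcases hEb1cases with h2 | h2 <;> rcases hEb3cases with h3 | h3
    · exact hd1 (h1.trans h2.symm)
    · exact hd1 (h1.trans h2.symm)
    · exact hd2 (h1.trans h3.symm)
    · exact hd3 (h2.trans h3.symm)
    · exact hd3 (h2.trans h3.symm)
    · exact hd2 (h1.trans h3.symm)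
    · exact hd1 (h1.trans h2.symm)
    · exact hd1 (h1.trans h2.symm)
  have hEa2 : E a2 = b2 := by
    rcases hcov (E a2) with h|h|h|h|h|h|h|h|h|h|h|h
    · exact absurd (Or.inl h) hEa2nA
    · exact absurd (Or.inr (Or.inl h)) hEa2nA
    · exact absurd (Or.inr (Or.inr (Or.inl h))) hEa2nA
    · exact absurd (Or.inr (Or.inr (Or.inr h))) hEa2nA
    · have h1 : a2 = E b0 := hextB b0 a2 (Or.inl rfl) (fun hh => hdisjAB a2 (Or.inr (Or.inr (Or.inl rfl))) hh) (h ▸ (hE1 a2).symm)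
      exact absurd (h1.trans ha0Eb0.symm) (fun e => nn_a0_a2 e.symm)
    · have p1 := (pch a2).2.2.2
      rw [h] at p1
      have pa := (pch a0).2.1
      rw [← ha2] at pa
      have p2 := (pch b0).1
      rw [← hb1] at p2
      have p3 := hopp hA0b0
      exact (hpar2 _ _ _ _ p1 pa p2 p3).elim
    · exact h
    · have p1 := (pch a2).2.2.2
      rw [h] at p1
      have pa := (pch a0).2.1
      rw [← ha2] at pa
      have p2 := (pch b0).2.2.1
      rw [← hb3] at p2
      have p3 := hopp hA0b0
      exact (hpar2 _ _ _ _ p1 pa p2 p3).elim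
    · exact absurd (Or.inl h) hEa2nC
    · exact absurd (Or.inr (Or.inl h)) hEa2nC
    · exact absurd (Or.inr (Or.inr (Or.inl h))) hEa2nC
    · exact absurd (Or.inr (Or.inr (Or.inr h))) hEa2nC
  have hEb1final : E b1 = c1 ∨ E b1 = c3 := by
    have hnB : ¬((E b1) = b0 ∨ (E b1) = b1 ∨ (E b1) = b2 ∨ (E b1) = b3) := by
      intro h
      have h1 := glem b0 b1 (Or.inr (Or.inl hb1))
      have h2 := (h1 (E b1)).mp ((eqB _).mpr h)
      rcases h2 with h2 | h2 | h2 | h2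
      · exact hEnev b1 h2
      · exact hE2 b1 h2
      · exact hEneU b1 h2
      · exact hE3 b1 h2
    have hnA : ¬((E b1) = a0 ∨ (E b1) = a1 ∨ (E b1) = a2 ∨ (E b1) = a3) := by
      rintro (h | h | h | h)
      · have h1 : b1 = E a0 := hextA a0 b1 (Or.inl rfl) (fun hh => hdisjBA b1 (Or.inr (Or.inl rfl)) hh) (h ▸ (hE1 b1).symm)
        exact nn_b0_b1 (hb0.trans h1.symm)
      · have h1 : b1 = E a1 := hextA a1 b1 (Or.inr (Or.inl rfl)) (fun hh => hdisjBA b1 (Or.inr (Or.inl rfl)) hh) (h ▸ (hE1 b1).symm)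
        exact hdisjBC b1 (Or.inr (Or.inl rfl)) (Or.inl (h1.trans hc0.symm))
      · have h1 : b1 = E a2 := hextA a2 b1 (Or.inr (Or.inr (Or.inl rfl))) (fun hh => hdisjBA b1 (Or.inr (Or.inl rfl)) hh) (h ▸ (hE1 b1).symm)
        exact absurd (h1.trans hEa2) nn_b1_b2
      · have h1 : b1 = E a3 := hextA a3 b1 (Or.inr (Or.inr (Or.inr rfl))) (fun hh => hdisjBA b1 (Or.inr (Or.inl rfl)) hh) (h ▸ (hE1 b1).symm)
        exact hdisjBC b1 (Or.inr (Or.inl rfl)) (Or.inr (Or.inr (Or.inl (h1.trans hEa3))))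
    rcases hcov (E b1) with h|h|h|h|h|h|h|h|h|h|h|h
    · exact absurd (Or.inl h) hnA
    · exact absurd (Or.inr (Or.inl h)) hnA
    · exact absurd (Or.inr (Or.inr (Or.inl h))) hnA
    · exact absurd (Or.inr (Or.inr (Or.inr h))) hnA
    · exact absurd (Or.inl h) hnB
    · exact absurd (Or.inr (Or.inl h)) hnB
    · exact absurd (Or.inr (Or.inr (Or.inl h))) hnB
    · exact absurd (Or.inr (Or.inr (Or.inr h))) hnB
    · have h1 : b1 = E c0 := hextC c0 b1 (Or.inl rfl) (fun hh => hdisjBC b1 (Or.inr (Or.inl rfl)) hh) (h ▸ (hE1 b1).symm)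
      exact absurd (h1.trans ha1Ec0.symm) (fun e => hdisjBA b1 (Or.inr (Or.inl rfl)) (Or.inr (Or.inl e)))
    · exact Or.inl h
    · have h1 : b1 = E c2 := hextC c2 b1 (Or.inr (Or.inr (Or.inl rfl))) (fun hh => hdisjBC b1 (Or.inr (Or.inl rfl)) hh) (h ▸ (hE1 b1).symm)
      exact absurd (h1.trans ha3Ec2.symm) (fun e => hdisjBA b1 (Or.inr (Or.inl rfl)) (Or.inr (Or.inr (Or.inr e))))
    · exact Or.inr h

  rcases hEb1final with hf | hf
  · exact absurd (franklin_contains_k33 G a0 a1 a2 a3 b0 b1 b2 c0 c1 c2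
      nn_a0_a1 nn_a0_a2 nn_a0_a3 nn_a0_b0 nn_a0_b1 nn_a0_b2 nn_a0_c0 nn_a0_c1 nn_a0_c2 nn_a1_a2 nn_a1_a3 nn_a1_b0 nn_a1_b1 nn_a1_b2 nn_a1_c0 nn_a1_c1 nn_a1_c2 nn_a2_a3 nn_a2_b0 nn_a2_b1 nn_a2_b2 nn_a2_c0 nn_a2_c1 nn_a2_c2 nn_a3_b0 nn_a3_b1 nn_a3_b2 nn_a3_c0 nn_a3_c1 nn_a3_c2 nn_b0_b1 nn_b0_b2 nn_b0_c0 nn_b0_c1 nn_b0_c2 nn_b1_b2 nn_b1_c0 nn_b1_c1 nn_b1_c2 nn_b2_c0 nn_b2_c1 nn_b2_c2 nn_c0_c1 nn_c0_c2 nn_c1_c2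
      hA01 hA03 hA0b0 hB01 hA12 hA32.symm (hEa2 ▸ hE1 a2) hB12 hC01 hA1c0 hC12 (hEa3 ▸ hE1 a3) (hf ▸ hE1 b1)) hplanar.2
  · exact absurd (franklin_contains_k33 G a0 a1 a2 a3 b0 b1 b2 c0 c3 c2
      nn_a0_a1 nn_a0_a2 nn_a0_a3 nn_a0_b0 nn_a0_b1 nn_a0_b2 nn_a0_c0 nn_a0_c3 nn_a0_c2 nn_a1_a2 nn_a1_a3 nn_a1_b0 nn_a1_b1 nn_a1_b2 nn_a1_c0 nn_a1_c3 nn_a1_c2 nn_a2_a3 nn_a2_b0 nn_a2_b1 nn_a2_b2 nn_a2_c0 nn_a2_c3 nn_a2_c2 nn_a3_b0 nn_a3_b1 nn_a3_b2 nn_a3_c0 nn_a3_c3 nn_a3_c2 nn_b0_b1 nn_b0_b2 nn_b0_c0 nn_b0_c3 nn_b0_c2 nn_b1_b2 nn_b1_c0 nn_b1_c3 nn_b1_c2 nn_b2_c0 nn_b2_c3 nn_b2_c2 nn_c0_c3 nn_c0_c2 nn_c2_c3.symm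
      hA01 hA03 hA0b0 hB01 hA12 hA32.symm (hEa2 ▸ hE1 a2) hB12 hC03 hA1c0 hC32 (hEa3 ▸ hE1 a3) (hf ▸ hE1 b1)) hplanar.2
end
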